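/- arXiv:1808.01078 — 5 statements merged into one kernel-verified Lean document; each statement's English description precedes it below -/
import Mathlib

section
/- Let P(λ) = Σ_{i=0}^d A_i λ^i be an n×n complex matrix polynomial of degree d, let ℓ ≥ 1 divide d, set k = d/ℓ, and let ε, η ≥ 0 be integers with ε+η+1 = k. Then the matrix polynomial M_{ε,η}(λ;P) satisfies the identity (Λ_η(λ^ℓ)^T ⊗ I_n) · M_{ε,η}(λ;P) · (Λ_ε(λ^ℓ) ⊗ I_n) = P(λ). In particular, the equation (Λ_η(λ^ℓ)^T ⊗ I_n) M(λ) (Λ_ε(λ^ℓ) ⊗ I_n) = P(λ) always has a solution M(λ) of degree at most ℓ. -/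
open Matrix BigOperators

noncomputable section

/-- Evaluation at `x` of the matrix polynomial with coefficients `C 0, …, C N`. -/
def mpEval {α β : Type*} (N : ℕ) (C : ℕ → Matrix α β ℂ) (x : ℂ) : Matrix α β ℂ :=
  ∑ i ∈ Finset.range (N + 1), x ^ i • C i

/-- Entrywise derivative of the matrix polynomial, evaluated at `x`. -/
def mpDer {α β : Type*} (N : ℕ) (C : ℕ → Matrix α β ℂ) (x : ℂ) : Matrix α β ℂ :=
  ∑ i ∈ Finset.range (N + 1), ((i : ℂ) * x ^ (i - 1)) • C i

/-- Spectral norm (operator 2-norm, i.e. largest singular value) of a complex matrix. -/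
def sNorm {α β : Type*} [Fintype α] [Fintype β] [DecidableEq β] (A : Matrix α β ℂ) : ℝ :=
  ‖LinearMap.toContinuousLinearMap (Matrix.toEuclideanLin A)‖

/-- Euclidean norm of a complex vector. -/
def vNorm {α : Type*} [Fintype α] (v : α → ℂ) : ℝ :=
  Real.sqrt (∑ i, ‖v i‖ ^ 2)

/-- `Λ_k(x^ℓ) ⊗ I_n`, a `(k+1)n × n` matrix whose `i`-th (0-based) `n × n` block is
`x^(ℓ(k−i)) I_n`. -/
def LamI (n k l : ℕ) (x : ℂ) : Matrix (Fin (k + 1) × Fin n) (Fin n) ℂ :=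
  Matrix.of fun p s => if p.2 = s then x ^ (l * (k - (p.1 : ℕ))) else 0

/-- `L_k(x^ℓ) ⊗ I_n`, a `kn × (k+1)n` matrix. -/
def LkI (n k l : ℕ) (x : ℂ) : Matrix (Fin k × Fin n) (Fin (k + 1) × Fin n) ℂ :=
  Matrix.of fun p q =>
    if p.2 = q.2 then
      if (q.1 : ℕ) = (p.1 : ℕ) then -1
      else if (q.1 : ℕ) = (p.1 : ℕ) + 1 then x ^ l else 0
    else 0

/-- The degree-`0` coefficient of `L_k(λ^ℓ) ⊗ I_n`. -/
def LkI0 (n k : ℕ) : Matrix (Fin k × Fin n) (Fin (k + 1) × Fin n) ℂ :=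
  Matrix.of fun p q => if p.2 = q.2 ∧ (q.1 : ℕ) = (p.1 : ℕ) then -1 else 0

/-- The degree-`ℓ` coefficient of `L_k(λ^ℓ) ⊗ I_n`. -/
def LkI1 (n k : ℕ) : Matrix (Fin k × Fin n) (Fin (k + 1) × Fin n) ℂ :=
  Matrix.of fun p q => if p.2 = q.2 ∧ (q.1 : ℕ) = (p.1 : ℕ) + 1 then 1 else 0

/-- `R_k(x^ℓ)`: `n × n` blocks `x^(ℓ(i−j)) I_n` for `j ≤ i` (0-based), `0` otherwise. -/
def Rmat (n k l : ℕ) (x : ℂ) : Matrix (Fin k × Fin n) (Fin (k + 1) × Fin n) ℂ :=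
  Matrix.of fun p q =>
    if p.2 = q.2 ∧ (q.1 : ℕ) ≤ (p.1 : ℕ) then x ^ (l * ((p.1 : ℕ) - (q.1 : ℕ))) else 0

/-- `S_k(x^ℓ)`: `n × n` blocks `x^(ℓ(k+i−j)) I_n` for `i < j` (0-based), `0` otherwise. -/
def Smat (n k l : ℕ) (x : ℂ) : Matrix (Fin k × Fin n) (Fin (k + 1) × Fin n) ℂ :=
  Matrix.of fun p q =>
    if p.2 = q.2 ∧ (p.1 : ℕ) < (q.1 : ℕ) then x ^ (l * (k + (p.1 : ℕ) - (q.1 : ℕ))) else 0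

/-- The block column `H(x; p, q, N) = [Λ_p(x^ℓ) ⊗ I_n ; R_q(x^ℓ) N(x) (Λ_p(x^ℓ) ⊗ I_n)]`. -/
def Hmat (n l p q : ℕ) (N : ℂ → Matrix (Fin (q + 1) × Fin n) (Fin (p + 1) × Fin n) ℂ)
    (x : ℂ) : Matrix ((Fin (p + 1) × Fin n) ⊕ (Fin q × Fin n)) (Fin n) ℂ :=
  Matrix.of fun r c =>
    Sum.elim (fun a => LamI n p l x a c)
      (fun a => (Rmat n q l x * (N x * LamI n p l x)) a c) r

/-- The block column `G(x; p, q, N) = [x^(qℓ)(Λ_p(x^ℓ) ⊗ I_n) ; −S_q(x^ℓ) N(x) (Λ_p(x^ℓ) ⊗ I_n)]`. -/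
def Gmat (n l p q : ℕ) (N : ℂ → Matrix (Fin (q + 1) × Fin n) (Fin (p + 1) × Fin n) ℂ)
    (x : ℂ) : Matrix ((Fin (p + 1) × Fin n) ⊕ (Fin q × Fin n)) (Fin n) ℂ :=
  Matrix.of fun r c =>
    Sum.elim (fun a => x ^ (q * l) * LamI n p l x a c)
      (fun a => (-(Smat n q l x * (N x * LamI n p l x))) a c) r

/-- Coefficients of the `(ε,n,η,n)`-block Kronecker `ℓ`-ification
`ℒ(λ) = [[M(λ), L_η(λ^ℓ)ᵀ ⊗ I_n], [L_ε(λ^ℓ) ⊗ I_n, 0]]`. -/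
def LcalCoef (n l ε η : ℕ)
    (M : ℕ → Matrix (Fin (η + 1) × Fin n) (Fin (ε + 1) × Fin n) ℂ) (i : ℕ) :
    Matrix ((Fin (η + 1) × Fin n) ⊕ (Fin ε × Fin n))
      ((Fin (ε + 1) × Fin n) ⊕ (Fin η × Fin n)) ℂ :=
  Matrix.fromBlocks (M i)
    (if i = 0 then (LkI0 n η)ᵀ else if i = l then (LkI1 n η)ᵀ else 0)
    (if i = 0 then LkI0 n ε else if i = l then LkI1 n ε else 0) 0

/-- `det P(λ)` as a scalar polynomial, where `P(λ) = Σ_{i=0}^d A_i λ^i`. -/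
def detPoly (n d : ℕ) (A : ℕ → Matrix (Fin n) (Fin n) ℂ) : Polynomial ℂ :=
  (∑ i ∈ Finset.range (d + 1), (Polynomial.X : Polynomial ℂ) ^ i • (A i).map Polynomial.C).det

/-- The horizontal concatenation `[A_0 A_1 ⋯ A_d]`. -/
def rowConcat (n d : ℕ) (A : ℕ → Matrix (Fin n) (Fin n) ℂ) :
    Matrix (Fin n) (Fin (d + 1) × Fin n) ℂ :=
  Matrix.of fun r q => A (q.1 : ℕ) r q.2

/-- Coefficientwise eigenvalue condition number of `Q(λ) = Σ_{i=0}^N C_i λ^i` at the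
eigentriple `(v, x0, u)`. -/
def coeffCond {α β : Type*} [Fintype α] [Fintype β] [DecidableEq β] (N : ℕ)
    (C : ℕ → Matrix α β ℂ) (x0 : ℂ) (u : β → ℂ) (v : α → ℂ) : ℝ :=
  (∑ i ∈ Finset.range (N + 1), ‖x0‖ ^ i * sNorm (C i)) * vNorm u * vNorm v /
    (‖x0‖ * ‖dotProduct (star v) ((mpDer N C x0).mulVec u)‖)

/-- Normwise eigenvalue condition number of `P(λ) = Σ_{i=0}^d A_i λ^i` at `(y, x0, x)`. -/
def normCond (n d : ℕ) (A : ℕ → Matrix (Fin n) (Fin n) ℂ) (x0 : ℂ)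
    (x y : Fin n → ℂ) : ℝ :=
  sNorm (rowConcat n d A) * (∑ i ∈ Finset.range (d + 1), ‖x0‖ ^ i) *
      vNorm x * vNorm y /
    (‖x0‖ * ‖dotProduct (star y) ((mpDer d A x0).mulVec x)‖)

/-- Each `n × n` block of each coefficient `M_t`, `t = 0, …, ℓ`, is `0`, `I_n`,
or one of the coefficients `A_s` of `P`.  -/
def IsCompanionM (n d l ε η : ℕ) (A : ℕ → Matrix (Fin n) (Fin n) ℂ)
    (M : ℕ → Matrix (Fin (η + 1) × Fin n) (Fin (ε + 1) × Fin n) ℂ) : Prop :=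
  ∀ t ≤ l, ∀ (i : Fin (η + 1)) (j : Fin (ε + 1)),
    (Matrix.of fun r s => M t (i, r) (j, s)) = 0 ∨
    (Matrix.of fun r s => M t (i, r) (j, s)) = (1 : Matrix (Fin n) (Fin n) ℂ) ∨
    ∃ s ≤ d, (Matrix.of fun r s' => M t (i, r) (j, s')) = A s


/-- The grade-`ℓ` matrix polynomials `B_j(λ)`: `B_1(λ) = Σ_{t=0}^ℓ A_t λ^t` and
`B_j(λ) = Σ_{t=1}^ℓ A_{ℓ(j−1)+t} λ^t` for `j ≥ 2`, evaluated at `x`. -/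
def Bval (n l : ℕ) (A : ℕ → Matrix (Fin n) (Fin n) ℂ) (j : ℕ) (x : ℂ) :
    Matrix (Fin n) (Fin n) ℂ :=
  if j = 1 then ∑ t ∈ Finset.range (l + 1), x ^ t • A t
  else ∑ t ∈ Finset.Icc 1 l, x ^ t • A (l * (j - 1) + t)

/-- The matrix polynomial `M_{ε,η}(λ; P)`, evaluated at `x`: its first block row is
`(B_k, B_{k−1}, …, B_{η+1})`, its last block column is `(B_{η+1}, B_η, …, B_1)ᵀ`,
and all other `n × n` blocks are `0`. -/
def M0val (n l ε η k : ℕ) (A : ℕ → Matrix (Fin n) (Fin n) ℂ) (x : ℂ) :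
    Matrix (Fin (η + 1) × Fin n) (Fin (ε + 1) × Fin n) ℂ :=
  Matrix.of fun pq rs =>
    (if (pq.1 : ℕ) = 0 then Bval n l A (k - (rs.1 : ℕ)) x
     else if (rs.1 : ℕ) = ε then Bval n l A (η + 1 - (pq.1 : ℕ)) x
     else 0) pq.2 rs.2

/-- `[0 ; D]`: prepend an `n × εn` zero block on top of `D`. -/
def padTop (n η ε : ℕ) (D : Matrix (Fin η × Fin n) (Fin ε × Fin n) ℂ) :
    Matrix (Fin (η + 1) × Fin n) (Fin ε × Fin n) ℂ :=
  Matrix.of fun p c =>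
    if h : (p.1 : ℕ) = 0 then 0
    else D (⟨(p.1 : ℕ) - 1, by have := p.1.isLt; omega⟩, p.2) c

/-- `[0 , D]`: prepend an `ηn × n` zero block on the left of `D`. -/
def padLeft (n η ε : ℕ) (D : Matrix (Fin η × Fin n) (Fin ε × Fin n) ℂ) :
    Matrix (Fin η × Fin n) (Fin (ε + 1) × Fin n) ℂ :=
  Matrix.of fun r q =>
    if h : (q.1 : ℕ) = 0 then 0
    else D r (⟨(q.1 : ℕ) - 1, by have := q.1.isLt; omega⟩, q.2)


/-- Coefficients of `Bval`. -/
def Bcoef (n l : ℕ) (A : ℕ → Matrix (Fin n) (Fin n) ℂ) (m t : ℕ) :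
    Matrix (Fin n) (Fin n) ℂ :=
  if m = 1 then A t else if t = 0 then 0 else A (l * (m - 1) + t)

lemma Bcoef_eval (n l : ℕ) (A : ℕ → Matrix (Fin n) (Fin n) ℂ) (m : ℕ) (x : ℂ) :
    ∑ t ∈ Finset.range (l + 1), x ^ t • Bcoef n l A m t = Bval n l A m x := by
  rcases eq_or_ne m 1 with h | h
  · simp [Bcoef, Bval, h]
  · rw [Bval, if_neg h,
      show Finset.Icc 1 l = (Finset.range (l + 1)).filter (fun t => ¬t = 0) by
        ext t; simp; omega,
      Finset.sum_filter]
    refine Finset.sum_congr rfl fun t _ => ?_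
    rcases eq_or_ne t 0 with ht | ht <;> simp [Bcoef, h, ht]

lemma keyB (n l : ℕ) (A : ℕ → Matrix (Fin n) (Fin n) ℂ) (x : ℂ) :
    ∀ K : ℕ, 1 ≤ K →
      ∑ m ∈ Finset.Icc 1 K, x ^ (l * (m - 1)) • Bval n l A m x
        = ∑ t ∈ Finset.range (l * K + 1), x ^ t • A t := by
  intro K
  induction K with
  | zero => omega
  | succ K ih =>
    intro _
    rcases Nat.eq_zero_or_pos K with hK | hK
    · subst hK
      simp [Bval]
    · have h2 : x ^ (l * (K + 1 - 1)) • Bval n l A (K + 1) x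
          = ∑ t ∈ Finset.range l, x ^ (l * K + 1 + t) • A (l * K + 1 + t) := by
        rw [Bval, if_neg (by omega), Finset.smul_sum,
          show Finset.Icc 1 l = Finset.Ico 1 (l + 1) from (Finset.Ico_add_one_right_eq_Icc 1 l).symm,
          Finset.sum_Ico_eq_sum_range]
        simp only [Nat.add_sub_cancel]
        refine Finset.sum_congr rfl fun t _ => ?_
        rw [smul_smul, ← pow_add, show l * K + (1 + t) = l * K + 1 + t by omega]
      rw [Finset.sum_Icc_succ_top (by omega : 1 ≤ K + 1),
        show l * (K + 1) + 1 = (l * K + 1) + l by ring,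
        Finset.sum_range_add, ih hK, h2]

lemma keySum (n l k ε η : ℕ) (hk : ε + η + 1 = k)
    (A : ℕ → Matrix (Fin n) (Fin n) ℂ) (x : ℂ) :
    ∑ i ∈ Finset.range (η + 1), ∑ j ∈ Finset.range (ε + 1),
        x ^ (l * (η - i) + l * (ε - j)) •
          (if i = 0 then Bval n l A (k - j) x
           else if j = ε then Bval n l A (η + 1 - i) x else 0)
      = ∑ t ∈ Finset.range (l * k + 1), x ^ t • A t := by
  rw [Finset.sum_range_succ']
  have h1 : ∑ j ∈ Finset.range (ε + 1),
      x ^ (l * (η - 0) + l * (ε - j)) •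
        (if (0 : ℕ) = 0 then Bval n l A (k - j) x
         else if j = ε then Bval n l A (η + 1 - 0) x else 0)
      = ∑ m ∈ Finset.Ico (η + 1) (k + 1), x ^ (l * (m - 1)) • Bval n l A m x := by
    rw [Finset.sum_Ico_eq_sum_range, show k + 1 - (η + 1) = ε + 1 by omega,
      ← Finset.sum_range_reflect]
    refine Finset.sum_congr rfl fun j hj => ?_
    simp only [Finset.mem_range] at hj
    rw [if_pos rfl,
      show ε + 1 - 1 - j = ε - j by omega,
      show ε - (ε - j) = j by omega,
      show k - (ε - j) = η + 1 + j by omega,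
      show η + 1 + j - 1 = η + j by omega,
      show η - 0 = η from rfl,
      Nat.mul_add l η j]
  have h2 : ∑ i ∈ Finset.range η, ∑ j ∈ Finset.range (ε + 1),
      x ^ (l * (η - (i + 1)) + l * (ε - j)) •
        (if i + 1 = 0 then Bval n l A (k - j) x
         else if j = ε then Bval n l A (η + 1 - (i + 1)) x else 0)
      = ∑ m ∈ Finset.Ico 1 (η + 1), x ^ (l * (m - 1)) • Bval n l A m x := by
    have hinner : ∀ i ∈ Finset.range η,
        ∑ j ∈ Finset.range (ε + 1),
          x ^ (l * (η - (i + 1)) + l * (ε - j)) •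
            (if i + 1 = 0 then Bval n l A (k - j) x
             else if j = ε then Bval n l A (η + 1 - (i + 1)) x else 0)
        = x ^ (l * (η - 1 - i)) • Bval n l A (η - i) x := by
      intro i hi
      simp only [Finset.mem_range] at hi
      have hterm : ∀ j ∈ Finset.range (ε + 1),
          x ^ (l * (η - (i + 1)) + l * (ε - j)) •
            (if i + 1 = 0 then Bval n l A (k - j) x
             else if j = ε then Bval n l A (η + 1 - (i + 1)) x else 0)
          = if j = ε then x ^ (l * (η - (i + 1)) + l * (ε - j)) •
              Bval n l A (η + 1 - (i + 1)) x else 0 := by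
        intro j _
        rw [if_neg (by omega)]
        split_ifs <;> simp
      rw [Finset.sum_congr rfl hterm, Finset.sum_ite_eq' (Finset.range (ε + 1)) ε,
        if_pos (by simp)]
      rw [show η - (i + 1) = η - 1 - i by omega,
        show η + 1 - (i + 1) = η - i by omega,
        Nat.sub_self, Nat.mul_zero, Nat.add_zero]
    rw [Finset.sum_congr rfl hinner, Finset.sum_Ico_eq_sum_range,
      Nat.add_sub_cancel, ← Finset.sum_range_reflect]
    refine Finset.sum_congr rfl fun i hi => ?_
    simp only [Finset.mem_range] at hi
    rw [show η - 1 - (η - 1 - i) = i by omega,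
      show η - (η - 1 - i) = 1 + i by omega,
      show 1 + i - 1 = i by omega,
      show 1 + i = i + 1 by omega]
  rw [h1, h2, Finset.sum_Ico_consecutive _ (by omega : 1 ≤ η + 1) (by omega : η + 1 ≤ k + 1),
    show Finset.Ico 1 (k + 1) = Finset.Icc 1 k from Finset.Ico_add_one_right_eq_Icc 1 k]
  exact keyB n l A x k (by omega)

lemma keySumFin (n l k ε η : ℕ) (hk : ε + η + 1 = k)
    (A : ℕ → Matrix (Fin n) (Fin n) ℂ) (x : ℂ) :
    ∑ i : Fin (η + 1), ∑ j : Fin (ε + 1),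
        x ^ (l * (η - (i : ℕ)) + l * (ε - (j : ℕ))) •
          (if (i : ℕ) = 0 then Bval n l A (k - (j : ℕ)) x
           else if (j : ℕ) = ε then Bval n l A (η + 1 - (i : ℕ)) x else 0)
      = ∑ t ∈ Finset.range (l * k + 1), x ^ t • A t := by
  rw [Fin.sum_univ_eq_sum_range (fun i => ∑ j : Fin (ε + 1),
    x ^ (l * (η - i) + l * (ε - (j : ℕ))) •
      (if i = 0 then Bval n l A (k - (j : ℕ)) x
       else if (j : ℕ) = ε then Bval n l A (η + 1 - i) x else 0))]
  rw [← keySum n l k ε η hk A x]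
  refine Finset.sum_congr rfl fun i _ => ?_
  exact Fin.sum_univ_eq_sum_range (fun j =>
    x ^ (l * (η - i) + l * (ε - j)) •
      (if i = 0 then Bval n l A (k - j) x
       else if j = ε then Bval n l A (η + 1 - i) x else 0)) (ε + 1)

lemma sandwich (n l ε η : ℕ) (x : ℂ)
    (N : Matrix (Fin (η + 1) × Fin n) (Fin (ε + 1) × Fin n) ℂ) (s s' : Fin n) :
    ((LamI n η l x)ᵀ * N * LamI n ε l x) s s'
      = ∑ i : Fin (η + 1), ∑ j : Fin (ε + 1),
          x ^ (l * (η - (i : ℕ)) + l * (ε - (j : ℕ))) * N (i, s) (j, s') := by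
  simp only [Matrix.mul_apply, Matrix.transpose_apply, LamI, Matrix.of_apply,
    Fintype.sum_prod_type, ite_mul, mul_ite, zero_mul, mul_zero,
    Finset.sum_ite_eq, Finset.sum_ite_eq', Finset.mem_univ, if_pos, Finset.sum_mul,
    pow_add]
  rw [Finset.sum_comm]
  refine Finset.sum_congr rfl fun i _ => Finset.sum_congr rfl fun j _ => ?_
  ring

/-- `M_{ε,η}(λ;P)` satisfies `(Λ_η(λ^ℓ)ᵀ ⊗ I_n) M_{ε,η}(λ;P) (Λ_ε(λ^ℓ) ⊗ I_n) = P(λ)`;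
in particular there is a solution `M(λ)` of degree at most `ℓ` of this equation. -/
theorem stmt3 (n d l k ε η : ℕ) (hn : 0 < n) (hl : 1 ≤ l) (hd : d = l * k)
    (hk : ε + η + 1 = k)
    (A : ℕ → Matrix (Fin n) (Fin n) ℂ) (hdeg : A d ≠ 0) :
    (∀ x : ℂ, (LamI n η l x)ᵀ * M0val n l ε η k A x * LamI n ε l x = mpEval d A x) ∧
      ∃ M : ℕ → Matrix (Fin (η + 1) × Fin n) (Fin (ε + 1) × Fin n) ℂ,
        ∀ x : ℂ, (LamI n η l x)ᵀ * mpEval l M x * LamI n ε l x = mpEval d A x := by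
  have hP : ∀ x : ℂ,
      (LamI n η l x)ᵀ * M0val n l ε η k A x * LamI n ε l x = mpEval d A x := by
    intro x
    ext s s'
    rw [sandwich]
    have h := congrFun (congrFun (keySumFin n l k ε η hk A x) s) s'
    simp only [Matrix.sum_apply, Matrix.smul_apply, smul_eq_mul] at h
    rw [show mpEval d A x = ∑ t ∈ Finset.range (l * k + 1), x ^ t • A t by
      rw [mpEval, hd]]
    simp only [Matrix.sum_apply, Matrix.smul_apply, smul_eq_mul]
    rw [← h]
    refine Finset.sum_congr rfl fun i _ => Finset.sum_congr rfl fun j _ => ?_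
    simp [M0val]
  refine ⟨hP, ?_⟩
  refine ⟨fun t => Matrix.of fun pq rs =>
    (if (pq.1 : ℕ) = 0 then Bcoef n l A (k - (rs.1 : ℕ)) t
     else if (rs.1 : ℕ) = ε then Bcoef n l A (η + 1 - (pq.1 : ℕ)) t else 0)
      pq.2 rs.2, fun x => ?_⟩
  have hM : mpEval l (fun t => Matrix.of fun pq rs =>
      (if (pq.1 : ℕ) = 0 then Bcoef n l A (k - (rs.1 : ℕ)) t
       else if (rs.1 : ℕ) = ε then Bcoef n l A (η + 1 - (pq.1 : ℕ)) t else 0)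
        pq.2 rs.2) x = M0val n l ε η k A x := by
    ext ⟨i, s⟩ ⟨j, c⟩
    simp only [mpEval, Matrix.sum_apply, Matrix.smul_apply, Matrix.of_apply,
      M0val, smul_eq_mul]
    have hB : ∀ m : ℕ, ∑ t ∈ Finset.range (l + 1), x ^ t * Bcoef n l A m t s c
        = Bval n l A m x s c := by
      intro m
      have := congrFun (congrFun (Bcoef_eval n l A m x) s) c
      simpa [Matrix.sum_apply, Matrix.smul_apply] using this
    rcases eq_or_ne (i : ℕ) 0 with h1 | h1
    · simp only [if_pos h1]
      exact hB _
    · rcases eq_or_ne (j : ℕ) ε with h2 | h2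
      · simp only [if_neg h1, if_pos h2]
        exact hB _
      · have h1' : i ≠ 0 := fun h => h1 (by simp [h])
        simp [if_neg h1, if_neg h2, h1']
  rw [hM]
  exact hP x

end
end

section
/- Let P(λ) = Σ_{i=0}^d A_i λ^i be an n×n complex matrix polynomial of degree d, let ℓ ≥ 1 divide d, set k = d/ℓ, and let ε, η ≥ 0 be integers with ε+η+1 = k. Let M(λ) = Σ_{t=0}^ℓ M_t λ^t ∈ ℂ[λ]^{(η+1)n×(ε+1)n}, and view each coefficient M_t as an (η+1)×(ε+1) block matrix with n×n blocks [M_t]_{ij}, where 1 ≤ i ≤ η+1 and 1 ≤ j ≤ ε+1. Then M satisfies (Λ_η(λ^ℓ)^T ⊗ I_n) M(λ) (Λ_ε(λ^ℓ) ⊗ I_n) = P(λ) if and only if both of the following families of equations hold (sums over empty index sets being 0): (a) Σ_{i+j=t+2} [M_ℓ]_{ij} + Σ_{i+j=t+1} [M_0]_{ij} = A_{d−tℓ} for every t = 0, 1, …, k; and (b) Σ_{i+j=s+2} [M_{ℓ−t}]_{ij} = A_{d−sℓ−t} for every s = 0, …, k−1 and every t = 1, …, ℓ−1. -/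
open Matrix BigOperators

noncomputable section

/- ---------- auxiliary lemmas for stmt5 ---------- -/

lemma sumIfShift' {β : Type*} [AddCommMonoid β] (N e m : ℕ) (f : ℕ → β) :
    ∑ t ∈ Finset.range (N+1), (if e + t = m then f t else 0) =
    if e ≤ m ∧ m ≤ e + N then f (m - e) else 0 := by
  split_ifs with h
  · rw [Finset.sum_eq_single (m - e)]
    · rw [if_pos (by omega)]
    · intro b hb hne
      simp only [Finset.mem_range] at hb
      rw [if_neg]; omega
    · intro hmem
      exact absurd (Finset.mem_range.mpr (by omega)) hmem
  · apply Finset.sum_eq_zero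
    intro b hb
    simp only [Finset.mem_range] at hb
    rw [if_neg]; omega

lemma polyCoeffEq' (N : ℕ) (c a : ℕ → ℂ)
    (h : ∀ x : ℂ, ∑ m ∈ Finset.range (N+1), x^m * c m = ∑ m ∈ Finset.range (N+1), x^m * a m) :
    ∀ m ≤ N, c m = a m := by
  have hpq : (∑ m ∈ Finset.range (N+1), Polynomial.C (c m) * Polynomial.X ^ m) =
             (∑ m ∈ Finset.range (N+1), Polynomial.C (a m) * Polynomial.X ^ m) := by
    apply Polynomial.funext; intro x
    simp only [Polynomial.eval_finset_sum, Polynomial.eval_mul, Polynomial.eval_C,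
      Polynomial.eval_pow, Polynomial.eval_X]
    calc ∑ m ∈ Finset.range (N+1), c m * x ^ m
        = ∑ m ∈ Finset.range (N+1), x ^ m * c m :=
          Finset.sum_congr rfl fun _ _ => mul_comm _ _
      _ = ∑ m ∈ Finset.range (N+1), x ^ m * a m := h x
      _ = ∑ m ∈ Finset.range (N+1), a m * x ^ m :=
          Finset.sum_congr rfl fun _ _ => mul_comm _ _
  intro m hm
  have := congrArg (fun p => Polynomial.coeff p m) hpq
  simpa [Polynomial.finset_sum_coeff, Polynomial.coeff_C_mul, Polynomial.coeff_X_pow,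
    Finset.sum_ite_eq, Finset.mem_range, Nat.lt_succ_iff, hm] using this

def blkSum (n l ε η : ℕ)
    (M : ℕ → Matrix (Fin (η+1) × Fin n) (Fin (ε+1) × Fin n) ℂ) (m : ℕ) :
    Matrix (Fin n) (Fin n) ℂ :=
  ∑ i : Fin (η+1), ∑ j : Fin (ε+1), ∑ t ∈ Finset.range (l+1),
    if l*(η - (i:ℕ)) + l*(ε - (j:ℕ)) + t = m then (Matrix.of fun r s => M t (i,r) (j,s)) else 0

lemma key1' (n d l k ε η : ℕ) (hl : 1 ≤ l) (hd : d = l * k) (hk : ε + η + 1 = k)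
    (M : ℕ → Matrix (Fin (η + 1) × Fin n) (Fin (ε + 1) × Fin n) ℂ) (x : ℂ) :
    (LamI n η l x)ᵀ * mpEval l M x * LamI n ε l x =
    ∑ m ∈ Finset.range (d+1), x^m • blkSum n l ε η M m := by
  unfold blkSum
  have hbound : ∀ (i : Fin (η+1)) (j : Fin (ε+1)) (t : ℕ), t ≤ l →
      l*(η - (i:ℕ)) + l*(ε - (j:ℕ)) + t ≤ d := by
    intro i j t ht
    have h1 : l*(η - (i:ℕ)) ≤ l*η := Nat.mul_le_mul le_rfl (Nat.sub_le _ _)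
    have h2 : l*(ε - (j:ℕ)) ≤ l*ε := Nat.mul_le_mul le_rfl (Nat.sub_le _ _)
    have h3 : l*η + l*ε + l = d := by
      rw [hd, ← hk]; ring
    omega
  ext r s
  have step1 : ((LamI n η l x)ᵀ * mpEval l M x * LamI n ε l x) r s
      = ∑ i : Fin (η+1), ∑ j : Fin (ε+1),
          x^(l*(η-(i:ℕ))) * (mpEval l M x) (i,r) (j,s) * x^(l*(ε-(j:ℕ))) := by
    simp only [Matrix.mul_apply, Matrix.transpose_apply, LamI, Matrix.of_apply,
      Fintype.sum_prod_type, ite_mul, mul_ite, zero_mul, mul_zero, Finset.sum_ite_eq,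
      Finset.sum_ite_eq', Finset.mem_univ, if_true]
    rw [Finset.sum_comm]; simp [Finset.sum_mul]
  rw [step1]
  trans (∑ i : Fin (η+1), ∑ j : Fin (ε+1), ∑ t ∈ Finset.range (l+1),
      x^(l*(η-(i:ℕ)) + l*(ε-(j:ℕ)) + t) * M t (i,r) (j,s))
  · refine Finset.sum_congr rfl fun i _ => Finset.sum_congr rfl fun j _ => ?_
    simp only [mpEval, Matrix.sum_apply, Matrix.smul_apply, smul_eq_mul, Finset.mul_sum,
      Finset.sum_mul]
    refine Finset.sum_congr rfl fun t _ => ?_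
    rw [pow_add, pow_add]; ring
  · symm
    simp only [Matrix.sum_apply, Matrix.smul_apply, smul_eq_mul,
      apply_ite (fun X : Matrix (Fin n) (Fin n) ℂ => X r s), Matrix.zero_apply, Matrix.of_apply,
      Finset.mul_sum]
    rw [Finset.sum_comm]
    refine Finset.sum_congr rfl fun i _ => ?_
    rw [Finset.sum_comm]
    refine Finset.sum_congr rfl fun j _ => ?_
    rw [Finset.sum_comm]
    refine Finset.sum_congr rfl fun t ht => ?_
    rw [Finset.sum_eq_single (l*(η-(i:ℕ)) + l*(ε-(j:ℕ)) + t)]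
    · rw [if_pos rfl]
    · intro m hm hne
      rw [if_neg (fun h => hne h.symm), mul_zero]
    · intro hmem
      exact absurd (Finset.mem_range.mpr
        (Nat.lt_succ_of_le (hbound i j t (Finset.mem_range.mp ht |> Nat.lt_succ_iff.mp)))) hmem

lemma keyA' (n d l k ε η : ℕ) (hl : 1 ≤ l) (hd : d = l*k) (hk : ε + η + 1 = k)
    (M : ℕ → Matrix (Fin (η+1) × Fin n) (Fin (ε+1) × Fin n) ℂ) (t : ℕ) (ht : t ≤ k) :
    blkSum n l ε η M (d - t*l) =
      (∑ i : Fin (η+1), ∑ j : Fin (ε+1),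
        if (i:ℕ)+(j:ℕ) = t then (Matrix.of fun r s => M l (i,r) (j,s)) else 0) +
      ∑ i : Fin (η+1), ∑ j : Fin (ε+1),
        if (i:ℕ)+(j:ℕ)+1 = t then (Matrix.of fun r s => M 0 (i,r) (j,s)) else 0 := by
  unfold blkSum
  rw [← Finset.sum_add_distrib]
  refine Finset.sum_congr rfl fun i _ => ?_
  rw [← Finset.sum_add_distrib]
  refine Finset.sum_congr rfl fun j _ => ?_
  rw [sumIfShift']
  have hi : (i:ℕ) ≤ η := Nat.lt_succ_iff.mp i.isLt
  have hj : (j:ℕ) ≤ ε := Nat.lt_succ_iff.mp j.isLt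
  have he : l*(η - (i:ℕ)) + l*(ε - (j:ℕ)) = l*((η - (i:ℕ)) + (ε - (j:ℕ))) :=
    (Nat.mul_add l _ _).symm
  set a := (η - (i:ℕ)) + (ε - (j:ℕ)) with ha
  set S := (i:ℕ) + (j:ℕ) with hS
  have haS : a + S + 1 = k := by omega
  have hka : l*a + l*S + l = l*k := by
    calc l*a + l*S + l = l*(a+S+1) := by ring
    _ = l*k := by rw [haS]
  have hcomm : t*l = l*t := Nat.mul_comm _ _
  have htk : l*t ≤ l*k := Nat.mul_le_mul le_rfl ht
  clear_value a S
  rw [he]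
  by_cases h1 : S = t
  · have hst : l*S = l*t := by rw [h1]
    have hc1 : l * a ≤ d - t * l ∧ d - t * l ≤ l * a + l := by omega
    have hc3 : ¬ (S + 1 = t) := by omega
    have hme : d - t * l - l * a = l := by omega
    rw [if_pos hc1, if_pos h1, if_neg hc3, add_zero, hme]
  · by_cases h2 : S + 1 = t
    · have hst : l*S + l = l*t := by rw [← h2]; ring
      have hc1 : l * a ≤ d - t * l ∧ d - t * l ≤ l * a + l := by omega
      have hme : d - t * l - l * a = 0 := by omega
      rw [if_pos hc1, if_neg h1, if_pos h2, zero_add, hme]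
    · rcases Nat.lt_or_ge S t with hlt | hge
      · have hst : l*S + l + l ≤ l*t := by
          calc l*S + l + l = l*(S+2) := by ring
          _ ≤ l*t := Nat.mul_le_mul le_rfl (by omega)
        have hc1 : ¬ (l * a ≤ d - t * l ∧ d - t * l ≤ l * a + l) := by omega
        rw [if_neg hc1, if_neg h1, if_neg h2, add_zero]
      · have hst : l*t + l ≤ l*S := by
          calc l*t + l = l*(t+1) := by ring
          _ ≤ l*S := Nat.mul_le_mul le_rfl (by omega)
        have hc1 : ¬ (l * a ≤ d - t * l ∧ d - t * l ≤ l * a + l) := by omega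
        rw [if_neg hc1, if_neg h1, if_neg h2, add_zero]

lemma keyB' (n d l k ε η : ℕ) (hl : 1 ≤ l) (hd : d = l*k) (hk : ε + η + 1 = k)
    (M : ℕ → Matrix (Fin (η+1) × Fin n) (Fin (ε+1) × Fin n) ℂ) (s' t : ℕ)
    (hs : s' < k) (ht1 : 1 ≤ t) (ht2 : t ≤ l - 1) :
    blkSum n l ε η M (d - s'*l - t) =
      ∑ i : Fin (η+1), ∑ j : Fin (ε+1),
        if (i:ℕ)+(j:ℕ) = s' then (Matrix.of fun r s => M (l-t) (i,r) (j,s)) else 0 := by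
  unfold blkSum
  refine Finset.sum_congr rfl fun i _ => ?_
  refine Finset.sum_congr rfl fun j _ => ?_
  rw [sumIfShift']
  have hi : (i:ℕ) ≤ η := Nat.lt_succ_iff.mp i.isLt
  have hj : (j:ℕ) ≤ ε := Nat.lt_succ_iff.mp j.isLt
  have he : l*(η - (i:ℕ)) + l*(ε - (j:ℕ)) = l*((η - (i:ℕ)) + (ε - (j:ℕ))) :=
    (Nat.mul_add l _ _).symm
  set a := (η - (i:ℕ)) + (ε - (j:ℕ)) with ha
  set S := (i:ℕ) + (j:ℕ) with hS
  have haS : a + S + 1 = k := by omega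
  have hka : l*a + l*S + l = l*k := by
    calc l*a + l*S + l = l*(a+S+1) := by ring
    _ = l*k := by rw [haS]
  have hcomm : s'*l = l*s' := Nat.mul_comm _ _
  have hsk : l*s' + l ≤ l*k := by
    calc l*s' + l = l*(s'+1) := by ring
    _ ≤ l*k := Nat.mul_le_mul le_rfl (by omega)
  clear_value a S
  rw [he]
  by_cases h1 : S = s'
  · have hst : l*S = l*s' := by rw [h1]
    have hc1 : l * a ≤ d - s' * l - t ∧ d - s' * l - t ≤ l * a + l := by omega
    have hme : d - s' * l - t - l * a = l - t := by omega
    rw [if_pos hc1, if_pos h1, hme]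
  · rcases Nat.lt_or_ge S s' with hlt | hge
    · have hst : l*S + l ≤ l*s' := by
        calc l*S + l = l*(S+1) := by ring
        _ ≤ l*s' := Nat.mul_le_mul le_rfl (by omega)
      have hc1 : ¬ (l * a ≤ d - s' * l - t ∧ d - s' * l - t ≤ l * a + l) := by omega
      rw [if_neg hc1, if_neg h1]
    · have hst : l*s' + l ≤ l*S := by
        calc l*s' + l = l*(s'+1) := by ring
        _ ≤ l*S := Nat.mul_le_mul le_rfl (by omega)
      have hc1 : ¬ (l * a ≤ d - s' * l - t ∧ d - s' * l - t ≤ l * a + l) := by omega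
      rw [if_neg hc1, if_neg h1]

lemma decompIdx (d l k m : ℕ) (hl : 1 ≤ l) (hd : d = l*k) (hm : m ≤ d) :
    (∃ t ≤ k, m = d - t*l) ∨
    (∃ s' < k, ∃ t, 1 ≤ t ∧ t ≤ l - 1 ∧ m = d - s'*l - t) := by
  have hl0 : 0 < l := hl
  have hqk : (d - m) / l ≤ k := by
    have h2 : (d - m) / l ≤ (l*k)/l := Nat.div_le_div_right (by omega)
    rwa [Nat.mul_div_cancel_left k hl0] at h2
  have h1 : l * ((d-m) / l) + (d-m) % l = d - m := Nat.div_add_mod _ _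
  have hr : (d - m) % l < l := Nat.mod_lt _ hl0
  set q := (d - m) / l with hqdef
  set r := (d - m) % l with hrdef
  clear_value q r
  have hcq : q * l = l * q := Nat.mul_comm _ _
  by_cases h0 : r = 0
  · left
    exact ⟨q, hqk, by omega⟩
  · right
    refine ⟨q, ?_, r, by omega, by omega, by omega⟩
    by_contra hcon
    have hqk' : q = k := by omega
    subst hqk'
    omega

/-- Block-antidiagonal characterization of the solutions `M(λ) = Σ_{t=0}^ℓ M_t λ^t` of
`(Λ_η(λ^ℓ)ᵀ ⊗ I_n) M(λ) (Λ_ε(λ^ℓ) ⊗ I_n) = P(λ)`; blocks are indexed `0`-based here, so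
the 1-based condition `i + j = c` reads `(i : ℕ) + (j : ℕ) + 2 = c`. -/
theorem stmt5 (n d l k ε η : ℕ) (hn : 0 < n) (hl : 1 ≤ l) (hd : d = l * k)
    (hk : ε + η + 1 = k)
    (A : ℕ → Matrix (Fin n) (Fin n) ℂ) (hdeg : A d ≠ 0)
    (M : ℕ → Matrix (Fin (η + 1) × Fin n) (Fin (ε + 1) × Fin n) ℂ) :
    (∀ x : ℂ, (LamI n η l x)ᵀ * mpEval l M x * LamI n ε l x = mpEval d A x) ↔
      ((∀ t ≤ k,
          ((∑ i : Fin (η + 1), ∑ j : Fin (ε + 1),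
                if (i : ℕ) + (j : ℕ) = t then
                  (Matrix.of fun r s => M l (i, r) (j, s)) else 0) +
              ∑ i : Fin (η + 1), ∑ j : Fin (ε + 1),
                if (i : ℕ) + (j : ℕ) + 1 = t then
                  (Matrix.of fun r s => M 0 (i, r) (j, s)) else 0) = A (d - t * l)) ∧
        ∀ s' < k, ∀ t, 1 ≤ t → t ≤ l - 1 →
          (∑ i : Fin (η + 1), ∑ j : Fin (ε + 1),
              if (i : ℕ) + (j : ℕ) = s' then
                (Matrix.of fun r s => M (l - t) (i, r) (j, s)) else 0) =
            A (d - s' * l - t)) := by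
  constructor
  · intro h
    have hC : ∀ m ≤ d, blkSum n l ε η M m = A m := by
      intro m hm
      ext r s
      refine polyCoeffEq' d (fun m => blkSum n l ε η M m r s) (fun m => A m r s) ?_ m hm
      intro x
      have h2 := (key1' n d l k ε η hl hd hk M x).symm.trans (h x)
      have h3 := congrFun (congrFun h2 r) s
      simpa [mpEval, Matrix.sum_apply, Matrix.smul_apply, smul_eq_mul] using h3
    constructor
    · intro t ht
      have hh := hC (d - t*l) (Nat.sub_le _ _)
      rw [keyA' n d l k ε η hl hd hk M t ht] at hh
      exact hh
    · intro s' hs t ht1 ht2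
      have hh := hC (d - s'*l - t) (by omega)
      rw [keyB' n d l k ε η hl hd hk M s' t hs ht1 ht2] at hh
      exact hh
  · rintro ⟨h1, h2⟩ x
    rw [key1' n d l k ε η hl hd hk M x]
    unfold mpEval
    refine Finset.sum_congr rfl fun m hm => ?_
    have hm' : m ≤ d := Nat.lt_succ_iff.mp (Finset.mem_range.mp hm)
    congr 1
    rcases decompIdx d l k m hl hd hm' with ⟨t, ht, rfl⟩ | ⟨s', hs, t, ht1, ht2, rfl⟩
    · rw [keyA' n d l k ε η hl hd hk M t ht]
      exact h1 t ht
    · rw [keyB' n d l k ε η hl hd hk M s' t hs ht1 ht2]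
      exact h2 s' hs t ht1 ht2

end
end

section
/- Let n ≥ 1, ℓ ≥ 1 and k ≥ 0 be integers and λ ∈ ℂ. If |λ| ≤ 1, then ‖Λ_k(λ^ℓ) ⊗ I_n‖₂ ≤ √(k+1), ‖R_k(λ^ℓ)‖₂ ≤ k, and ‖S_k(λ^ℓ)‖₂ ≤ k. If |λ| > 1, then |λ|^{−kℓ} ‖Λ_k(λ^ℓ) ⊗ I_n‖₂ ≤ √(k+1), |λ|^{−(k−1)ℓ} ‖R_k(λ^ℓ)‖₂ ≤ k, and |λ|^{−(k−1)ℓ} ‖S_k(λ^ℓ)‖₂ ≤ k. -/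
open Matrix BigOperators

noncomputable section

lemma schur {α β : Type*} [Fintype α] [Fintype β] [DecidableEq β]
    (A : Matrix α β ℂ) (r c : ℝ) (hr : 0 ≤ r) (hc : 0 ≤ c)
    (hrow : ∀ i, ∑ j, ‖A i j‖ ≤ r)
    (hcol : ∀ j, ∑ i, ‖A i j‖ ≤ c) :
    sNorm A ≤ Real.sqrt (r * c) := by
  rw [sNorm]
  apply ContinuousLinearMap.opNorm_le_bound _ (Real.sqrt_nonneg _)
  intro v
  rw [LinearMap.coe_toContinuousLinearMap']
  rw [EuclideanSpace.norm_eq, EuclideanSpace.norm_eq]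
  have hcomp : ∀ i, ‖(Matrix.toEuclideanLin A v) i‖ ≤ ∑ j, ‖A i j‖ * ‖(v : β → ℂ) j‖ := by
    intro i
    have : (Matrix.toEuclideanLin A v) i = ∑ j, A i j * v j := rfl
    rw [this]
    refine (norm_sum_le _ _).trans (le_of_eq ?_)
    exact Finset.sum_congr rfl fun j _ => by simp
  have key : ∑ i, ‖(Matrix.toEuclideanLin A v) i‖ ^ 2 ≤ (r * c) * ∑ j, ‖(v : β → ℂ) j‖ ^ 2 := by
    have h2 : ∀ i, (∑ j, ‖A i j‖ * ‖(v : β → ℂ) j‖) ^ 2 ≤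
        r * ∑ j, ‖A i j‖ * ‖(v : β → ℂ) j‖ ^ 2 := by
      intro i
      have cs := Finset.sum_mul_sq_le_sq_mul_sq Finset.univ
        (fun j => Real.sqrt (‖A i j‖))
        (fun j => Real.sqrt (‖A i j‖) * ‖(v : β → ℂ) j‖)
      have e1 : ∀ j : β, Real.sqrt (‖A i j‖) *
          (Real.sqrt (‖A i j‖) * ‖(v : β → ℂ) j‖) =
          ‖A i j‖ * ‖(v : β → ℂ) j‖ := fun j => by
        rw [← mul_assoc, Real.mul_self_sqrt (norm_nonneg _)]
      have e2 : ∀ j : β, Real.sqrt (‖A i j‖) ^ 2 = ‖A i j‖ := fun j =>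
        Real.sq_sqrt (norm_nonneg _)
      have e3 : ∀ j : β, (Real.sqrt (‖A i j‖) * ‖(v : β → ℂ) j‖) ^ 2 =
          ‖A i j‖ * ‖(v : β → ℂ) j‖ ^ 2 := fun j => by
        rw [mul_pow, Real.sq_sqrt (norm_nonneg _)]
      simp only [e1, e2, e3] at cs
      refine cs.trans ?_
      have hnn : (0:ℝ) ≤ ∑ j, ‖A i j‖ * ‖(v : β → ℂ) j‖ ^ 2 :=
        Finset.sum_nonneg fun j _ => mul_nonneg (norm_nonneg _) (sq_nonneg _)
      exact mul_le_mul_of_nonneg_right (hrow i) hnn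
    calc ∑ i, ‖(Matrix.toEuclideanLin A v) i‖ ^ 2
        ≤ ∑ i, (∑ j, ‖A i j‖ * ‖(v : β → ℂ) j‖) ^ 2 := by
          refine Finset.sum_le_sum fun i _ => ?_
          exact pow_le_pow_left₀ (norm_nonneg _) (hcomp i) 2
      _ ≤ ∑ i, r * ∑ j, ‖A i j‖ * ‖(v : β → ℂ) j‖ ^ 2 :=
          Finset.sum_le_sum fun i _ => h2 i
      _ = r * ∑ j, (∑ i, ‖A i j‖) * ‖(v : β → ℂ) j‖ ^ 2 := by
          rw [← Finset.mul_sum, Finset.sum_comm]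
          simp_rw [Finset.sum_mul]
      _ ≤ r * ∑ j, c * ‖(v : β → ℂ) j‖ ^ 2 := by
          refine mul_le_mul_of_nonneg_left (Finset.sum_le_sum fun j _ => ?_) hr
          exact mul_le_mul_of_nonneg_right (hcol j) (sq_nonneg _)
      _ = (r * c) * ∑ j, ‖(v : β → ℂ) j‖ ^ 2 := by rw [← Finset.mul_sum, mul_assoc]
  calc Real.sqrt (∑ i, ‖(Matrix.toEuclideanLin A v) i‖ ^ 2)
      ≤ Real.sqrt ((r * c) * ∑ j, ‖(v : β → ℂ) j‖ ^ 2) := Real.sqrt_le_sqrt key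
    _ = Real.sqrt (r * c) * Real.sqrt (∑ j, ‖(v : β → ℂ) j‖ ^ 2) :=
        Real.sqrt_mul (mul_nonneg hr hc) _

lemma lam_bound (n k l : ℕ) (x : ℂ) (T : ℝ) (hT : 0 ≤ T)
    (hent : ∀ i : ℕ, i ≤ k → ‖x‖ ^ (l * (k - i)) ≤ T) :
    sNorm (LamI n k l x) ≤ Real.sqrt ((k : ℝ) + 1) * T := by
  have h := schur (LamI n k l x) T (((k : ℝ) + 1) * T) hT
    (mul_nonneg (by positivity) hT) ?_ ?_
  · refine h.trans (le_of_eq ?_)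
    rw [show T * (((k : ℝ) + 1) * T) = ((k : ℝ) + 1) * T ^ 2 by ring,
      Real.sqrt_mul (by positivity), Real.sqrt_sq hT]
  · rintro ⟨i, r⟩
    have : ∀ s : Fin n, ‖LamI n k l x (i, r) s‖ =
        if r = s then ‖x‖ ^ (l * (k - (i : ℕ))) else 0 := by
      intro s
      simp only [LamI, Matrix.of_apply, apply_ite norm, norm_zero, norm_pow]
    simp only [this, Finset.sum_ite_eq, Finset.mem_univ, if_true]
    exact hent i (Nat.le_of_lt_succ i.2)
  · intro s
    rw [Fintype.sum_prod_type]
    have : ∀ i : Fin (k+1), ∑ r : Fin n, ‖LamI n k l x (i, r) s‖ ≤ T := by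
      intro i
      have e : ∀ r : Fin n, ‖LamI n k l x (i, r) s‖ =
          if r = s then ‖x‖ ^ (l * (k - (i : ℕ))) else 0 := fun r => by
        simp only [LamI, Matrix.of_apply, apply_ite norm, norm_zero, norm_pow]
      simp only [e, Finset.sum_ite_eq', Finset.mem_univ, if_true]
      first | exact hent i (Nat.le_of_lt_succ i.2) | (exact le_of_eq rfl)
    calc ∑ i : Fin (k+1), ∑ r : Fin n, ‖LamI n k l x (i, r) s‖
        ≤ ∑ _i : Fin (k+1), T := Finset.sum_le_sum fun i _ => this i
      _ = ((k : ℝ) + 1) * T := by simp [Finset.sum_const]; try ring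

lemma R_bound (n k l : ℕ) (x : ℂ) (t : ℝ) (ht : 0 ≤ t)
    (hent : ∀ i j : ℕ, j ≤ i → i < k → ‖x‖ ^ (l * (i - j)) ≤ t) :
    sNorm (Rmat n k l x) ≤ (k : ℝ) * t := by
  have hkt : (0:ℝ) ≤ (k : ℝ) * t := mul_nonneg (Nat.cast_nonneg _) ht
  have h := schur (Rmat n k l x) ((k:ℝ)*t) ((k:ℝ)*t) hkt hkt ?_ ?_
  · rwa [Real.sqrt_mul_self hkt] at h
  · rintro ⟨i, r⟩
    have e : ∀ (j : Fin (k+1)) (s : Fin n), ‖Rmat n k l x (i, r) (j, s)‖ =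
        if r = s then (if (j:ℕ) ≤ (i:ℕ) then ‖x‖ ^ (l * ((i:ℕ) - (j:ℕ))) else 0)
        else 0 := by
      intro j s
      by_cases h1 : r = s <;> by_cases h2 : (j:ℕ) ≤ (i:ℕ) <;> simp [Rmat, h1, h2]
    rw [Fintype.sum_prod_type]
    simp only [e, Finset.sum_ite_eq, Finset.mem_univ, if_true]
    calc ∑ j : Fin (k+1), (if (j:ℕ) ≤ (i:ℕ) then ‖x‖ ^ (l * ((i:ℕ) - (j:ℕ))) else 0)
        ≤ ∑ j : Fin (k+1), (if (j:ℕ) = k then 0 else t) := by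
          refine Finset.sum_le_sum fun j _ => ?_
          by_cases h2 : (j:ℕ) ≤ (i:ℕ)
          · have hjk : (j:ℕ) ≠ k := by have := i.2; omega
            simp only [h2, if_true, hjk, if_false]
            exact hent i j h2 i.2
          · simp only [h2, if_false]
            split <;> simp [ht]
      _ = (k : ℝ) * t := by
          rw [Fin.sum_univ_castSucc]
          simp [Fin.val_last, Fin.castSucc, fun m : Fin k => (Nat.ne_of_lt m.2 : (m:ℕ) ≠ k),
            Finset.sum_const]
  · rintro ⟨j, s⟩
    have e : ∀ (i : Fin k) (r : Fin n), ‖Rmat n k l x (i, r) (j, s)‖ =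
        if r = s then (if (j:ℕ) ≤ (i:ℕ) then ‖x‖ ^ (l * ((i:ℕ) - (j:ℕ))) else 0)
        else 0 := by
      intro i r
      by_cases h1 : r = s <;> by_cases h2 : (j:ℕ) ≤ (i:ℕ) <;> simp [Rmat, h1, h2]
    rw [Fintype.sum_prod_type]
    simp only [e, Finset.sum_ite_eq', Finset.mem_univ, if_true]
    calc ∑ i : Fin k, (if (j:ℕ) ≤ (i:ℕ) then ‖x‖ ^ (l * ((i:ℕ) - (j:ℕ))) else 0)
        ≤ ∑ _i : Fin k, t := by
          refine Finset.sum_le_sum fun i _ => ?_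
          split
          · exact hent i j ‹_› i.2
          · exact ht
      _ = (k : ℝ) * t := by simp [Finset.sum_const]

lemma S_bound (n k l : ℕ) (x : ℂ) (t : ℝ) (ht : 0 ≤ t)
    (hent : ∀ i j : ℕ, i < j → i < k → j ≤ k → ‖x‖ ^ (l * (k + i - j)) ≤ t) :
    sNorm (Smat n k l x) ≤ (k : ℝ) * t := by
  have hkt : (0:ℝ) ≤ (k : ℝ) * t := mul_nonneg (Nat.cast_nonneg _) ht
  have h := schur (Smat n k l x) ((k:ℝ)*t) ((k:ℝ)*t) hkt hkt ?_ ?_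
  · rwa [Real.sqrt_mul_self hkt] at h
  · rintro ⟨i, r⟩
    have e : ∀ (j : Fin (k+1)) (s : Fin n), ‖Smat n k l x (i, r) (j, s)‖ =
        if r = s then (if (i:ℕ) < (j:ℕ) then ‖x‖ ^ (l * (k + (i:ℕ) - (j:ℕ))) else 0)
        else 0 := by
      intro j s
      by_cases h1 : r = s <;> by_cases h2 : (i:ℕ) < (j:ℕ) <;> simp [Smat, h1, h2]
    rw [Fintype.sum_prod_type]
    simp only [e, Finset.sum_ite_eq, Finset.mem_univ, if_true]
    calc ∑ j : Fin (k+1), (if (i:ℕ) < (j:ℕ) then ‖x‖ ^ (l * (k + (i:ℕ) - (j:ℕ))) else 0)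
        ≤ ∑ j : Fin (k+1), (if (j:ℕ) = 0 then 0 else t) := by
          refine Finset.sum_le_sum fun j _ => ?_
          by_cases h2 : (i:ℕ) < (j:ℕ)
          · have hj0 : (j:ℕ) ≠ 0 := by omega
            simp only [h2, if_true, hj0, if_false]
            exact hent i j h2 i.2 (Nat.le_of_lt_succ j.2)
          · simp only [h2, if_false]
            split <;> simp [ht]
      _ = (k : ℝ) * t := by
          rw [Fin.sum_univ_succ]
          simp [Finset.sum_const]
  · rintro ⟨j, s⟩
    have e : ∀ (i : Fin k) (r : Fin n), ‖Smat n k l x (i, r) (j, s)‖ =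
        if r = s then (if (i:ℕ) < (j:ℕ) then ‖x‖ ^ (l * (k + (i:ℕ) - (j:ℕ))) else 0)
        else 0 := by
      intro i r
      by_cases h1 : r = s <;> by_cases h2 : (i:ℕ) < (j:ℕ) <;> simp [Smat, h1, h2]
    rw [Fintype.sum_prod_type]
    simp only [e, Finset.sum_ite_eq', Finset.mem_univ, if_true]
    calc ∑ i : Fin k, (if (i:ℕ) < (j:ℕ) then ‖x‖ ^ (l * (k + (i:ℕ) - (j:ℕ))) else 0)
        ≤ ∑ _i : Fin k, t := by
          refine Finset.sum_le_sum fun i _ => ?_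
          split
          · exact hent i j ‹_› i.2 (Nat.le_of_lt_succ j.2)
          · exact ht
      _ = (k : ℝ) * t := by simp [Finset.sum_const]

/-- Norm bounds for `Λ_k(λ^ℓ) ⊗ I_n`, `R_k(λ^ℓ)` and `S_k(λ^ℓ)`, in the two regimes
`|λ| ≤ 1` and `|λ| > 1`. -/
theorem stmt6 (n l k : ℕ) (hn : 1 ≤ n) (hl : 1 ≤ l) (lam : ℂ) :
    (‖lam‖ ≤ 1 →
        sNorm (LamI n k l lam) ≤ Real.sqrt ((k : ℝ) + 1) ∧
        sNorm (Rmat n k l lam) ≤ (k : ℝ) ∧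
        sNorm (Smat n k l lam) ≤ (k : ℝ)) ∧
      (1 < ‖lam‖ →
        (‖lam‖ ^ (k * l))⁻¹ * sNorm (LamI n k l lam) ≤ Real.sqrt ((k : ℝ) + 1) ∧
        (‖lam‖ ^ ((k - 1) * l))⁻¹ * sNorm (Rmat n k l lam) ≤ (k : ℝ) ∧
        (‖lam‖ ^ ((k - 1) * l))⁻¹ * sNorm (Smat n k l lam) ≤ (k : ℝ)) := by
  constructor
  · intro h
    have h0 : (0:ℝ) ≤ ‖lam‖ := norm_nonneg _
    refine ⟨?_, ?_, ?_⟩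
    · have := lam_bound n k l lam 1 zero_le_one fun i _ => pow_le_one₀ h0 h
      simpa using this
    · have := R_bound n k l lam 1 zero_le_one fun i j _ _ => pow_le_one₀ h0 h
      simpa using this
    · have := S_bound n k l lam 1 zero_le_one fun i j _ _ _ => pow_le_one₀ h0 h
      simpa using this
  · intro h
    have h1 : (1:ℝ) ≤ ‖lam‖ := le_of_lt h
    have hpos : ∀ m : ℕ, (0:ℝ) < ‖lam‖ ^ m :=
      fun m => pow_pos (lt_trans zero_lt_one h) m
    refine ⟨?_, ?_, ?_⟩
    · have hb := lam_bound n k l lam (‖lam‖ ^ (k * l)) (hpos _).le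
        (fun i _ => pow_le_pow_right₀ h1 (by
          calc l * (k - i) ≤ l * k := Nat.mul_le_mul_left l (Nat.sub_le k i)
            _ = k * l := Nat.mul_comm l k))
      rw [inv_mul_le_iff₀ (hpos _)]
      linarith [hb]
    · have hb := R_bound n k l lam (‖lam‖ ^ ((k - 1) * l)) (hpos _).le
        (fun i j hji hik => pow_le_pow_right₀ h1 (by
          calc l * (i - j) ≤ l * (k - 1) := Nat.mul_le_mul_left l (by omega)
            _ = (k - 1) * l := Nat.mul_comm l (k-1)))
      rw [inv_mul_le_iff₀ (hpos _)]
      linarith [hb]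
    · have hb := S_bound n k l lam (‖lam‖ ^ ((k - 1) * l)) (hpos _).le
        (fun i j hij hik hjk => pow_le_pow_right₀ h1 (by
          calc l * (k + i - j) ≤ l * (k - 1) := Nat.mul_le_mul_left l (by omega)
            _ = (k - 1) * l := Nat.mul_comm l (k-1)))
      rw [inv_mul_le_iff₀ (hpos _)]
      linarith [hb]

end
end

section
/- Let P be an n×n complex matrix polynomial of degree d, let ℓ ≥ 1 divide d with k = d/ℓ, and let ℒ(λ) be an (ε,n,η,n)-block Kronecker ℓ-ification of P built from a solution M(λ) of (Λ_η(λ^ℓ)^T ⊗ I_n) M(λ) (Λ_ε(λ^ℓ) ⊗ I_n) = P(λ). Then the right-sided factorization ℒ(λ) · H(λ; ε, η, M) = e_{η+1} ⊗ P(λ) holds as an identity of matrix polynomials, i.e., viewing the kn×n product as a column of k blocks of size n×n, the (η+1)-st block equals P(λ) and all other blocks are 0. -/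
open Matrix BigOperators

noncomputable section

def kron {a b : Type*} (n : ℕ) (c : a → b → ℂ) : Matrix (a × Fin n) (b × Fin n) ℂ :=
  Matrix.of fun p q => if p.2 = q.2 then c p.1 q.1 else 0

def kronV {a : Type*} (n : ℕ) (v : a → ℂ) : Matrix (a × Fin n) (Fin n) ℂ :=
  Matrix.of fun p s => if p.2 = s then v p.1 else 0

lemma kron_mul_kron {a b c' : Type*} [Fintype b] (n : ℕ) (C : a → b → ℂ) (D : b → c' → ℂ) :
    kron n C * kron n D = kron n (fun i j => ∑ t, C i t * D t j) := by
  ext ⟨i, r⟩ ⟨j, s⟩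
  simp only [Matrix.mul_apply, kron, Matrix.of_apply, Fintype.sum_prod_type]
  rw [Finset.sum_comm]
  simp [ite_and, apply_ite, mul_ite, ite_mul, Finset.mul_sum]
  split <;> simp_all

lemma kron_mul_kronV {a b : Type*} [Fintype b] (n : ℕ) (C : a → b → ℂ) (v : b → ℂ) :
    kron n C * kronV n v = kronV n (fun i => ∑ t, C i t * v t) := by
  ext ⟨i, r⟩ s
  simp only [Matrix.mul_apply, kron, kronV, Matrix.of_apply, Fintype.sum_prod_type]
  rw [Finset.sum_comm]
  simp [ite_and, apply_ite, mul_ite, ite_mul, Finset.mul_sum]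
  split <;> simp_all

lemma kronV_mul_left {a : Type*} {γ : Type*} [Fintype γ] (n : ℕ) (v : a → ℂ)
    (P : Matrix (Fin n) γ ℂ) (p : a × Fin n) (c : γ) :
    (kronV n v * P) p c = v p.1 * P p.2 c := by
  simp [Matrix.mul_apply, kronV, ite_mul, Finset.sum_ite_eq]

lemma kronV_mul_kronV_T {a b : Type*} (n : ℕ) (v : a → ℂ) (w : b → ℂ) :
    kronV n v * (kronV n w)ᵀ = kron n (fun i j => v i * w j) := by
  ext ⟨i, r⟩ ⟨j, s⟩
  simp [Matrix.mul_apply, kronV, kron, ite_mul, mul_ite, Finset.sum_ite_eq, eq_comm]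

lemma kron_transpose {a b : Type*} (n : ℕ) (c : a → b → ℂ) :
    (kron n c)ᵀ = kron n (fun j i => c i j) := by
  ext ⟨j, s⟩ ⟨i, r⟩
  simp [kron, Matrix.transpose_apply, eq_comm]


lemma sum_two_pts {l : ℕ} (hl : 1 ≤ l) (x u v : ℂ) :
    ∑ i ∈ Finset.range (l+1), x^i * (if i = 0 then u else if i = l then v else 0)
      = u + x^l * v := by
  have h : ∀ i ∈ Finset.range (l+1), x^i * (if i = 0 then u else if i = l then v else 0)
      = (if i = 0 then u else 0) + (if i = l then x^l * v else 0) := by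
    intro i _
    split_ifs with h1 h2 <;> first | omega | (subst_vars; ring)
  rw [Finset.sum_congr rfl h, Finset.sum_add_distrib, Finset.sum_ite_eq', Finset.sum_ite_eq',
    if_pos (Finset.mem_range.mpr (by omega)), if_pos (Finset.mem_range.mpr (by omega))]

lemma scal1 (k l : ℕ) (x : ℂ) (i : Fin k) :
    ∑ t : Fin (k+1),
      (if (t:ℕ) = (i:ℕ) then (-1:ℂ) else if (t:ℕ) = (i:ℕ)+1 then x^l else 0)
        * x^(l*(k-(t:ℕ))) = 0 := by
  rw [Fin.sum_univ_eq_sum_range (fun m =>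
    (if m = (i:ℕ) then (-1:ℂ) else if m = (i:ℕ)+1 then x^l else 0) * x^(l*(k-m)))]
  have h : ∀ m ∈ Finset.range (k+1),
      (if m = (i:ℕ) then (-1:ℂ) else if m = (i:ℕ)+1 then x^l else 0) * x^(l*(k-m))
      = (if m = (i:ℕ) then -x^(l*(k-(i:ℕ))) else 0)
        + (if m = (i:ℕ)+1 then x^l * x^(l*(k-((i:ℕ)+1))) else 0) := by
    intro m _
    split_ifs with h1 h2 <;> first | omega | (subst_vars; ring)
  rw [Finset.sum_congr rfl h, Finset.sum_add_distrib, Finset.sum_ite_eq', Finset.sum_ite_eq',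
    if_pos (Finset.mem_range.mpr (by omega)),
    if_pos (Finset.mem_range.mpr (by have := i.isLt; omega))]
  have hik : l*(k-(i:ℕ)) = l + l*(k-((i:ℕ)+1)) := by
    have hi := i.isLt
    have h2 : k - (i:ℕ) = (k - ((i:ℕ)+1)) + 1 := by omega
    rw [h2, Nat.mul_add]; ring
  rw [hik, pow_add]; ring

lemma scal2 (k l : ℕ) (x : ℂ) (i j : Fin (k+1)) :
    ∑ t : Fin k,
      (if (i:ℕ) = (t:ℕ) then (-1:ℂ) else if (i:ℕ) = (t:ℕ)+1 then x^l else 0)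
        * (if (j:ℕ) ≤ (t:ℕ) then x^(l*((t:ℕ)-(j:ℕ))) else 0)
    = (if i = Fin.last k then (1:ℂ) else 0) * x^(l*(k-(j:ℕ)))
      - (if i = j then 1 else 0) := by
  have hpow : ∀ a b : ℕ, b ≤ a → x^l * x^(l*(a-b)) = x^(l*(a+1-b)) := by
    intro a b hba
    rw [← pow_add]
    congr 1
    have h2 : a+1-b = (a-b)+1 := by omega
    rw [h2, Nat.mul_add]; ring
  have hlast : (i = Fin.last k) = ((i:ℕ) = k) := by
    simp [Fin.ext_iff]
  have hij : (i = j) = ((i:ℕ) = (j:ℕ)) := by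
    simp [Fin.ext_iff]
  simp only [hlast, hij]
  rw [Fin.sum_univ_eq_sum_range (fun m =>
    (if (i:ℕ) = m then (-1:ℂ) else if (i:ℕ) = m+1 then x^l else 0)
      * (if (j:ℕ) ≤ m then x^(l*(m-(j:ℕ))) else 0))]
  have h : ∀ m ∈ Finset.range k,
      (if (i:ℕ) = m then (-1:ℂ) else if (i:ℕ) = m+1 then x^l else 0)
        * (if (j:ℕ) ≤ m then x^(l*(m-(j:ℕ))) else 0)
      = (if m = (i:ℕ) then -(if (j:ℕ) ≤ m then x^(l*(m-(j:ℕ))) else 0) else 0)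
        + (if m = (i:ℕ)-1 then (if 1 ≤ (i:ℕ) then
            x^l * (if (j:ℕ) ≤ m then x^(l*(m-(j:ℕ))) else 0) else 0) else 0) := by
    intro m _
    split_ifs <;> first | rfl | omega | ring | (exfalso; omega) | (subst_vars; first | ring | omega)
  rw [Finset.sum_congr rfl h, Finset.sum_add_distrib, Finset.sum_ite_eq', Finset.sum_ite_eq']
  simp only [Finset.mem_range]
  have hik := i.isLt
  have hjk := j.isLt
  split_ifs <;>
    first
    | omega
    | (exfalso; omega)
    | ring1
    | (rw [hpow ((i:ℕ)-1) (j:ℕ) (by omega),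
        show (i:ℕ)-1+1-(j:ℕ) = (i:ℕ)-(j:ℕ) by omega]; ring1)
    | (rw [hpow ((i:ℕ)-1) (j:ℕ) (by omega),
        show (i:ℕ)-1+1-(j:ℕ) = k-(j:ℕ) by omega]; ring1)
    | (rw [show (i:ℕ)-(j:ℕ) = 0 by omega, Nat.mul_zero]; ring1)
    | (rw [show k-(j:ℕ) = 0 by omega, Nat.mul_zero]; ring1)


lemma LkI_eq (n k l : ℕ) (x : ℂ) :
    LkI n k l x = kron n (fun (i : Fin k) (t : Fin (k+1)) =>
      if (t:ℕ) = (i:ℕ) then (-1:ℂ) else if (t:ℕ) = (i:ℕ)+1 then x^l else 0) := rfl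

lemma LamI_eq (n k l : ℕ) (x : ℂ) :
    LamI n k l x = kronV n (fun t : Fin (k+1) => x^(l*(k-(t:ℕ)))) := rfl

lemma Rmat_eq (n k l : ℕ) (x : ℂ) :
    Rmat n k l x = kron n (fun (i : Fin k) (t : Fin (k+1)) =>
      if (t:ℕ) ≤ (i:ℕ) then x^(l*((i:ℕ)-(t:ℕ))) else 0) := by
  ext ⟨i, r⟩ ⟨t, s⟩
  simp [Rmat, kron, ite_and]

lemma one_eq_kron (n : ℕ) {a : Type*} [DecidableEq a] :
    (1 : Matrix (a × Fin n) (a × Fin n) ℂ) = kron n (fun i j => if i = j then 1 else 0) := by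
  ext ⟨i, r⟩ ⟨j, s⟩
  simp only [Matrix.one_apply, kron, Matrix.of_apply, Prod.mk.injEq]
  split_ifs <;> simp_all [Prod.ext_iff]

lemma key1 (n k l : ℕ) (x : ℂ) : LkI n k l x * LamI n k l x = 0 := by
  rw [LkI_eq, LamI_eq, kron_mul_kronV]
  ext ⟨i, r⟩ s
  simp only [kronV, Matrix.of_apply, Matrix.zero_apply]
  rw [scal1 k l x i]
  simp

lemma key2 (n k l : ℕ) (x : ℂ) :
    (LkI n k l x)ᵀ * Rmat n k l x
      = kronV n (fun i : Fin (k+1) => if i = Fin.last k then (1:ℂ) else 0)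
          * (LamI n k l x)ᵀ - 1 := by
  rw [LkI_eq, Rmat_eq, kron_transpose, kron_mul_kron, LamI_eq, kronV_mul_kronV_T, one_eq_kron]
  ext ⟨i, r⟩ ⟨j, s⟩
  simp only [kron, Matrix.of_apply, Matrix.sub_apply]
  rcases eq_or_ne r s with hrs | hrs
  · simp only [if_pos hrs]
    exact scal2 k l x i j
  · simp only [if_neg hrs]
    ring

lemma LkI_decomp (n k l : ℕ) (hl : 1 ≤ l) (x : ℂ) (p : Fin k × Fin n) (q : Fin (k+1) × Fin n) :
    LkI0 n k p q + x^l * LkI1 n k p q = LkI n k l x p q := by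
  rcases eq_or_ne p.2 q.2 with h2 | h2
  · simp only [LkI0, LkI1, LkI, Matrix.of_apply, h2, true_and, if_true]
    split_ifs <;> first | ring1 | omega | (exfalso; omega)
  · simp [LkI0, LkI1, LkI, h2]

lemma hLcal (n l ε η : ℕ) (hl : 1 ≤ l)
    (M : ℕ → Matrix (Fin (η + 1) × Fin n) (Fin (ε + 1) × Fin n) ℂ) (x : ℂ) :
    mpEval l (LcalCoef n l ε η M) x
      = Matrix.fromBlocks (mpEval l M x) (LkI n η l x)ᵀ (LkI n ε l x) 0 := by
  ext r c
  rcases r with a | a <;> rcases c with b | b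
  · simp [mpEval, LcalCoef, Matrix.sum_apply]
  · simp only [mpEval, LcalCoef, Matrix.sum_apply, Matrix.smul_apply, smul_eq_mul,
      Matrix.fromBlocks_apply₁₂]
    have hpush : ∀ i : ℕ,
        ((if i = 0 then (LkI0 n η)ᵀ else if i = l then (LkI1 n η)ᵀ else 0) :
          Matrix _ _ ℂ) a b
        = (if i = 0 then (LkI0 n η)ᵀ a b else if i = l then (LkI1 n η)ᵀ a b else 0) := by
      intro i; split_ifs <;> simp
    simp only [hpush]
    rw [sum_two_pts hl x ((LkI0 n η)ᵀ a b) ((LkI1 n η)ᵀ a b)]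
    exact LkI_decomp n η l hl x b a
  · simp only [mpEval, LcalCoef, Matrix.sum_apply, Matrix.smul_apply, smul_eq_mul,
      Matrix.fromBlocks_apply₂₁]
    have hpush : ∀ i : ℕ,
        ((if i = 0 then LkI0 n ε else if i = l then LkI1 n ε else 0) : Matrix _ _ ℂ) a b
        = (if i = 0 then LkI0 n ε a b else if i = l then LkI1 n ε a b else 0) := by
      intro i; split_ifs <;> simp
    simp only [hpush]
    rw [sum_two_pts hl x (LkI0 n ε a b) (LkI1 n ε a b)]
    exact LkI_decomp n ε l hl x a b
  · simp [mpEval, LcalCoef, Matrix.sum_apply]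


/-- Right-sided factorization `ℒ(λ) H(λ; ε, η, M) = e_{η+1} ⊗ P(λ)`: the `(η+1)`-st
`n × n` block of the product is `P(λ)` and all other blocks are `0`. -/
theorem stmt7 (n d l ε η : ℕ) (hn : 0 < n) (hl : 1 ≤ l) (hd : d = l * (ε + η + 1))
    (A : ℕ → Matrix (Fin n) (Fin n) ℂ) (hdeg : A d ≠ 0)
    (M : ℕ → Matrix (Fin (η + 1) × Fin n) (Fin (ε + 1) × Fin n) ℂ)
    (hM : ∀ x : ℂ, (LamI n η l x)ᵀ * mpEval l M x * LamI n ε l x = mpEval d A x) :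
    ∀ x : ℂ,
      mpEval l (LcalCoef n l ε η M) x * Hmat n l ε η (mpEval l M) x =
        Matrix.of fun r c =>
          Sum.elim
            (fun a : Fin (η + 1) × Fin n =>
              if a.1 = Fin.last η then mpEval d A x a.2 c else 0)
            (fun _ : Fin ε × Fin n => (0 : ℂ)) r := by
  intro x
  have hLc := hLcal n l ε η hl M x
  ext r c
  rw [Matrix.mul_apply, Fintype.sum_sum_type]
  rcases r with a | a
  · have h1 : ∑ b : Fin (ε+1) × Fin n,
        (mpEval l (LcalCoef n l ε η M) x) (Sum.inl a) (Sum.inl b)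
          * Hmat n l ε η (mpEval l M) x (Sum.inl b) c
        = (mpEval l M x * LamI n ε l x) a c := by
      rw [Matrix.mul_apply]
      apply Finset.sum_congr rfl
      intro b _
      rw [hLc]
      simp [Hmat]
    have h2 : ∑ b : Fin η × Fin n,
        (mpEval l (LcalCoef n l ε η M) x) (Sum.inl a) (Sum.inr b)
          * Hmat n l ε η (mpEval l M) x (Sum.inr b) c
        = ((LkI n η l x)ᵀ * (Rmat n η l x * (mpEval l M x * LamI n ε l x))) a c := by
      rw [Matrix.mul_apply]
      apply Finset.sum_congr rfl
      intro b _
      rw [hLc]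
      simp [Hmat]
    rw [h1, h2, ← Matrix.add_apply]
    have key : mpEval l M x * LamI n ε l x
        + (LkI n η l x)ᵀ * (Rmat n η l x * (mpEval l M x * LamI n ε l x))
        = kronV n (fun i : Fin (η+1) => if i = Fin.last η then (1:ℂ) else 0)
            * mpEval d A x := by
      rw [← Matrix.mul_assoc ((LkI n η l x)ᵀ), key2, Matrix.sub_mul, Matrix.one_mul,
        Matrix.mul_assoc (kronV n fun i : Fin (η+1) => if i = Fin.last η then (1:ℂ) else 0),
        ← Matrix.mul_assoc ((LamI n η l x)ᵀ), hM x]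
      abel
    rw [key, kronV_mul_left]
    simp only [Matrix.of_apply, Sum.elim_inl]
    split_ifs <;> ring1
  · have h1 : ∑ b : Fin (ε+1) × Fin n,
        (mpEval l (LcalCoef n l ε η M) x) (Sum.inr a) (Sum.inl b)
          * Hmat n l ε η (mpEval l M) x (Sum.inl b) c
        = (LkI n ε l x * LamI n ε l x) a c := by
      rw [Matrix.mul_apply]
      apply Finset.sum_congr rfl
      intro b _
      rw [hLc]
      simp [Hmat]
    have h2 : ∑ b : Fin η × Fin n,
        (mpEval l (LcalCoef n l ε η M) x) (Sum.inr a) (Sum.inr b)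
          * Hmat n l ε η (mpEval l M) x (Sum.inr b) c = 0 := by
      apply Finset.sum_eq_zero
      intro b _
      rw [hLc]
      simp
    rw [h1, h2, key1]
    simp

end
end

section
/- Let P be a regular n×n complex matrix polynomial of degree d, let ℓ ≥ 1 divide d, and let ℒ(λ) be an (ε,n,η,n)-block Kronecker ℓ-ification of P built from a solution M(λ) of (Λ_η(λ^ℓ)^T ⊗ I_n) M(λ) (Λ_ε(λ^ℓ) ⊗ I_n) = P(λ). Let λ0 ∈ ℂ be a finite nonzero eigenvalue of P, i.e., λ0 ≠ 0 and det P(λ0) = 0. Then a nonzero vector z ∈ ℂ^{(d/ℓ)n} satisfies ℒ(λ0) z = 0 if and only if z = G(λ0; ε, η, M) x for some nonzero x ∈ ℂ^n with P(λ0) x = 0. -/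
open Matrix BigOperators

noncomputable section

private lemma sum_fin_ite {k : ℕ} (m : ℕ) (c : Fin k → ℂ) :
    ∑ i : Fin k, (if (i : ℕ) = m then c i else 0) = if h : m < k then c ⟨m, h⟩ else 0 := by
  split_ifs with h
  · rw [Finset.sum_eq_single ⟨m, h⟩]
    · simp
    · intro b _ hb
      have : (b : ℕ) ≠ m := fun hh => hb (Fin.ext hh)
      simp [this]
    · simp
  · refine Finset.sum_eq_zero fun i _ => ?_
    rw [if_neg]
    exact fun hh => h (hh ▸ i.isLt)

private lemma ite_split (a b : Prop) [Decidable a] [Decidable b] (hab : a → b → False) (p q : ℂ) :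
    (if a then p else if b then q else 0) = (if a then p else 0) + (if b then q else 0) := by
  split_ifs with h1 h2 h2 <;> first | (exact absurd h2 (fun hb => hab h1 hb)) | ring

private lemma LamI_mulVec {n k l : ℕ} {x : ℂ} (w : Fin n → ℂ) (j : Fin (k+1)) (s : Fin n) :
    ((LamI n k l x).mulVec w) (j, s) = x ^ (l * (k - (j:ℕ))) * w s := by
  simp [Matrix.mulVec, dotProduct, LamI, ite_mul, Finset.sum_ite_eq]

private lemma LamIT_mulVec {n k l : ℕ} {x : ℂ} (u : Fin (k+1) × Fin n → ℂ) (s : Fin n) :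
    (((LamI n k l x)ᵀ).mulVec u) s = ∑ m : Fin (k+1), x ^ (l * (k - (m:ℕ))) * u (m, s) := by
  simp only [Matrix.mulVec, dotProduct, Matrix.transpose_apply, LamI, Matrix.of_apply]
  rw [Fintype.sum_prod_type]
  refine Finset.sum_congr rfl fun m _ => ?_
  simp [ite_mul, Finset.sum_ite_eq']
private lemma LkI_mulVec {n k l : ℕ} {x : ℂ} (v : Fin (k+1) × Fin n → ℂ) (i : Fin k) (s : Fin n) :
    ((LkI n k l x).mulVec v) (i, s) = x ^ l * v (i.succ, s) - v (i.castSucc, s) := by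
  simp only [Matrix.mulVec, dotProduct, LkI, Matrix.of_apply]
  rw [Fintype.sum_prod_type]
  have step : ∀ j : Fin (k+1),
      (∑ t : Fin n, (if s = t then (if (j:ℕ) = (i:ℕ) then (-1:ℂ)
          else if (j:ℕ) = (i:ℕ) + 1 then x ^ l else 0) else 0) * v (j, t))
        = (if (j:ℕ) = (i:ℕ) then -v (j, s) else 0)
          + (if (j:ℕ) = (i:ℕ) + 1 then x ^ l * v (j, s) else 0) := by
    intro j
    rw [Finset.sum_congr rfl fun t _ => by rw [ite_mul, zero_mul], Finset.sum_ite_eq]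
    simp only [Finset.mem_univ, if_true, zero_mul]
    split_ifs <;> first | omega | ring
  rw [Finset.sum_congr rfl fun j _ => step j, Finset.sum_add_distrib,
    sum_fin_ite _ (fun j => -v (j, s)), sum_fin_ite _ (fun j => x ^ l * v (j, s))]
  rw [dif_pos (by omega : (i:ℕ) < k + 1), dif_pos (by omega : (i:ℕ) + 1 < k + 1)]
  have h1 : (⟨(i:ℕ), by omega⟩ : Fin (k+1)) = i.castSucc := by ext; simp
  have h2 : (⟨(i:ℕ)+1, by omega⟩ : Fin (k+1)) = i.succ := by ext; simp
  rw [h1, h2]; ring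

private lemma LkIT_mulVec {n k l : ℕ} {x : ℂ} (w : Fin k × Fin n → ℂ) (j : Fin (k+1)) (s : Fin n) :
    (((LkI n k l x)ᵀ).mulVec w) (j, s)
      = (if h : (j:ℕ) < k then -w (⟨(j:ℕ), h⟩, s) else 0)
        + (if h : 0 < (j:ℕ) then
            x ^ l * w (⟨(j:ℕ) - 1, by have := j.isLt; omega⟩, s) else 0) := by
  simp only [Matrix.mulVec, dotProduct, Matrix.transpose_apply, LkI, Matrix.of_apply]
  rw [Fintype.sum_prod_type]
  have step : ∀ i : Fin k,
      (∑ t : Fin n, (if t = s then (if (j:ℕ) = (i:ℕ) then (-1:ℂ)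
          else if (j:ℕ) = (i:ℕ) + 1 then x ^ l else 0) else 0) * w (i, t))
        = (if (i:ℕ) = (j:ℕ) then -w (i, s) else 0)
          + (if 0 < (j:ℕ) then (if (i:ℕ) = (j:ℕ) - 1 then x ^ l * w (i, s) else 0) else 0) := by
    intro i
    rw [Finset.sum_congr rfl fun t _ => by rw [ite_mul, zero_mul], Finset.sum_ite_eq']
    simp only [Finset.mem_univ, if_true, zero_mul]
    split_ifs <;> first | omega | ring
  rw [Finset.sum_congr rfl fun i _ => step i, Finset.sum_add_distrib,
    sum_fin_ite _ (fun i => -w (i, s))]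
  congr 1
  by_cases h0 : 0 < (j:ℕ)
  · rw [dif_pos h0]
    rw [Finset.sum_congr rfl fun i _ => if_pos h0]
    rw [sum_fin_ite _ (fun i => x ^ l * w (i, s)), dif_pos (by have := j.isLt; omega)]
  · rw [dif_neg h0]
    refine Finset.sum_eq_zero fun i _ => if_neg h0

private lemma Smat_mulVec {n k l : ℕ} {x : ℂ} (u : Fin (k+1) × Fin n → ℂ) (i : Fin k) (s : Fin n) :
    ((Smat n k l x).mulVec u) (i, s)
      = ∑ m : Fin (k+1), if (i:ℕ) < (m:ℕ) then x ^ (l * (k + (i:ℕ) - (m:ℕ))) * u (m, s) else 0 := by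
  simp only [Matrix.mulVec, dotProduct, Smat, Matrix.of_apply]
  rw [Fintype.sum_prod_type]
  refine Finset.sum_congr rfl fun m _ => ?_
  rw [Finset.sum_congr rfl fun t _ => by rw [ite_and, ite_mul, zero_mul],
    Finset.sum_ite_eq]
  simp [ite_mul]
private lemma LkI_mul_LamI {n k l : ℕ} {x : ℂ} : LkI n k l x * LamI n k l x = 0 := by
  ext ⟨i, r⟩ s
  have : (LkI n k l x * LamI n k l x) (i, r) s
      = ((LkI n k l x).mulVec (fun q => LamI n k l x q s)) (i, r) := by
    simp [Matrix.mul_apply, Matrix.mulVec, dotProduct]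
  rw [this, LkI_mulVec]
  simp only [LamI, Matrix.of_apply, Fin.val_succ, Fin.coe_castSucc, Matrix.zero_apply]
  by_cases hr : r = s
  · rw [if_pos hr, if_pos hr, ← pow_add]
    have hk : k - (i:ℕ) = (k - ((i:ℕ) + 1)) + 1 := by have := i.isLt; omega
    rw [hk, Nat.mul_succ, pow_add]; ring
  · simp [hr]

private lemma LkI_ker {n k l : ℕ} {x : ℂ} (v : Fin (k+1) × Fin n → ℂ)
    (h : (LkI n k l x).mulVec v = 0) (j : Fin (k+1)) (s : Fin n) :
    v (j, s) = x ^ (l * (k - (j:ℕ))) * v (Fin.last k, s) := by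
  induction j using Fin.reverseInduction with
  | last => simp [Fin.last]
  | cast i ih =>
    have h0 : x ^ l * v (i.succ, s) - v (i.castSucc, s) = 0 := by
      rw [← LkI_mulVec, h]; rfl
    have := ih
    rw [Fin.coe_castSucc]
    have hk : k - (i:ℕ) = (k - ((i:ℕ) + 1)) + 1 := by have := i.isLt; omega
    have harith : x ^ (l * (k - (i:ℕ))) = x ^ l * x ^ (l * (k - ((i:ℕ) + 1))) := by
      rw [hk, Nat.mul_succ, pow_add]; ring
    calc v (i.castSucc, s) = x ^ l * v (i.succ, s) := by linear_combination -h0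
    _ = x ^ l * (x ^ (l * (k - ((i:ℕ)+1))) * v (Fin.last k, s)) := by rw [ih, Fin.val_succ]
    _ = x ^ (l * (k - (i:ℕ))) * v (Fin.last k, s) := by rw [harith, mul_assoc]

private lemma LkIT_inj {n k l : ℕ} {x : ℂ} (w : Fin k × Fin n → ℂ)
    (h : ((LkI n k l x)ᵀ).mulVec w = 0) : w = 0 := by
  funext p
  obtain ⟨i, s⟩ := p
  suffices H : ∀ m : ℕ, ∀ i : Fin k, (i:ℕ) = m → w (i, s) = 0 from H (i:ℕ) i rfl
  intro m
  induction m with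
  | zero =>
    intro i hi
    have hrow : (((LkI n k l x)ᵀ).mulVec w) (⟨0, by omega⟩, s) = 0 := by rw [h]; rfl
    rw [LkIT_mulVec] at hrow
    simp only [Fin.val_mk] at hrow
    rw [dif_pos (by omega : 0 < k), dif_neg (by omega)] at hrow
    have : w (⟨0, by omega⟩, s) = 0 := by linear_combination -hrow
    have hieq : i = (⟨0, by omega⟩ : Fin k) := Fin.ext (by simp [hi])
    rw [hieq]; exact this
  | succ m ihm =>
    intro i hi
    have hrow : (((LkI n k l x)ᵀ).mulVec w) (⟨m + 1, by omega⟩, s) = 0 := by rw [h]; rfl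
    rw [LkIT_mulVec] at hrow
    simp only [Fin.val_mk] at hrow
    rw [dif_pos (by omega : m + 1 < k), dif_pos (by omega : 0 < m + 1)] at hrow
    have hm : w (⟨m + 1 - 1, by omega⟩, s) = 0 := ihm ⟨m + 1 - 1, by omega⟩ (by simp)
    rw [hm, mul_zero] at hrow
    have : w (⟨m + 1, by omega⟩, s) = 0 := by linear_combination -hrow
    have hieq : i = (⟨m + 1, by omega⟩ : Fin k) := Fin.ext (by simp [hi])
    rw [hieq]; exact this
private lemma key_id {n k l : ℕ} {x : ℂ} (u : Fin (k+1) × Fin n → ℂ) (j : Fin (k+1)) (s : Fin n) :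
    (((LkI n k l x)ᵀ).mulVec (-(Smat n k l x).mulVec u)) (j, s)
      = -(x ^ (l * k) * u (j, s))
        + (if (j:ℕ) = 0 then ∑ m : Fin (k+1), x ^ (l * (k - (m:ℕ))) * u (m, s) else 0) := by
  rw [LkIT_mulVec]
  by_cases h0 : (j:ℕ) = 0
  · rw [dif_neg (show ¬(0 < (j:ℕ)) by omega), if_pos h0]
    by_cases hk : (j:ℕ) < k
    · rw [dif_pos hk]
      simp only [Pi.neg_apply, neg_neg]
      rw [Smat_mulVec]
      have hsplit : ∀ m : Fin (k+1), x ^ (l * (k - (m:ℕ))) * u (m, s)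
          = (if (m:ℕ) = 0 then x ^ (l * (k - (m:ℕ))) * u (m, s) else 0)
            + (if 0 < (m:ℕ) then x ^ (l * (k - (m:ℕ))) * u (m, s) else 0) := by
        intro m; split_ifs <;> first | omega | ring
      rw [Finset.sum_congr rfl fun m _ => hsplit m, Finset.sum_add_distrib,
        sum_fin_ite _ (fun m => x ^ (l * (k - (m:ℕ))) * u (m, s)), dif_pos (by omega : 0 < k + 1)]
      have hcongr : ∀ m : Fin (k+1),
          (if (↑(⟨(j:ℕ), hk⟩ : Fin k) : ℕ) < (m:ℕ) then
            x ^ (l * (k + (↑(⟨(j:ℕ), hk⟩ : Fin k) : ℕ) - (m:ℕ))) * u (m, s) else 0)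
          = (if 0 < (m:ℕ) then x ^ (l * (k - (m:ℕ))) * u (m, s) else 0) := by
        intro m
        simp only [Fin.val_mk, h0]
        exact if_congr (by omega) (by rw [Nat.add_zero]) rfl
      rw [Finset.sum_congr rfl fun m _ => hcongr m]
      simp only [Fin.val_mk, Nat.sub_zero]
      rw [show (⟨0, by omega⟩ : Fin (k+1)) = j from Fin.ext (by simp [h0])]
      ring
    · have hk0 : k = 0 := by omega
      subst hk0
      rw [dif_neg hk]
      have hj : j = 0 := Fin.ext (by simp [h0])
      subst hj
      simp [Fin.sum_univ_one]
  · rw [if_neg h0, dif_pos (by omega : 0 < (j:ℕ))]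
    simp only [Pi.neg_apply, neg_neg, mul_neg]
    set T := ∑ m : Fin (k+1), (if (j:ℕ) < (m:ℕ) then x ^ (l * (k + (j:ℕ) - (m:ℕ))) * u (m, s) else 0)
      with hT
    have hA : (if h : (j:ℕ) < k then ((Smat n k l x).mulVec u) (⟨(j:ℕ), h⟩, s) else 0) = T := by
      by_cases hjk : (j:ℕ) < k
      · rw [dif_pos hjk, Smat_mulVec, hT]
      · rw [dif_neg hjk, hT]
        exact (Finset.sum_eq_zero fun m _ => by rw [if_neg (by omega)]).symm
    have hB : x ^ l * ((Smat n k l x).mulVec u) (⟨(j:ℕ) - 1, by have := j.isLt; omega⟩, s)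
        = T + x ^ (l * k) * u (j, s) := by
      rw [Smat_mulVec, Finset.mul_sum]
      have hstep : ∀ m : Fin (k+1),
          x ^ l * (if (↑(⟨(j:ℕ) - 1, by have := j.isLt; omega⟩ : Fin k) : ℕ) < (m:ℕ) then
              x ^ (l * (k + (↑(⟨(j:ℕ) - 1, by have := j.isLt; omega⟩ : Fin k) : ℕ) - (m:ℕ))) * u (m, s) else 0)
          = (if (j:ℕ) < (m:ℕ) then x ^ (l * (k + (j:ℕ) - (m:ℕ))) * u (m, s) else 0)
            + (if (m:ℕ) = (j:ℕ) then x ^ (l * (k + (j:ℕ) - (m:ℕ))) * u (m, s) else 0) := by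
        intro m
        simp only [Fin.val_mk]
        have hjle : (j:ℕ) ≤ k := by have := j.isLt; omega
        have hmle : (m:ℕ) ≤ k := by have := m.isLt; omega
        by_cases hc : (j:ℕ) - 1 < (m:ℕ)
        · rw [if_pos hc]
          have he : l * (k + (j:ℕ) - (m:ℕ)) = l + l * (k + ((j:ℕ) - 1) - (m:ℕ)) := by
            have h1 : k + (j:ℕ) - (m:ℕ) = (k + ((j:ℕ) - 1) - (m:ℕ)) + 1 := by omega
            rw [h1, Nat.mul_succ]; omega
          by_cases hc2 : (j:ℕ) < (m:ℕ)
          · rw [if_pos hc2, if_neg (by omega), he, pow_add]; ring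
          · rw [if_neg hc2, if_pos (by omega), he, pow_add]; ring
        · rw [if_neg hc, if_neg (by omega), if_neg (by omega)]
          ring
      rw [Finset.sum_congr rfl fun m _ => hstep m, Finset.sum_add_distrib,
        sum_fin_ite _ (fun m => x ^ (l * (k + (j:ℕ) - (m:ℕ))) * u (m, s)),
        dif_pos j.isLt]
      rw [show (⟨(j:ℕ), j.isLt⟩ : Fin (k+1)) = j from Fin.ext rfl,
        show k + (j:ℕ) - (j:ℕ) = k from by omega]
    rw [hA, hB]
    ring
private lemma sum_two {x : ℂ} {l : ℕ} (hl : 1 ≤ l) (c0 cl : ℂ) :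
    ∑ i ∈ Finset.range (l+1), x ^ i * (if i = 0 then c0 else if i = l then cl else 0)
      = c0 + x ^ l * cl := by
  have hsub : ({0, l} : Finset ℕ) ⊆ Finset.range (l+1) := by
    intro i hi
    simp only [Finset.mem_insert, Finset.mem_singleton] at hi
    simp only [Finset.mem_range]; omega
  rw [← Finset.sum_subset hsub (fun i _ hni => ?_)]
  · rw [Finset.sum_pair (show (0:ℕ) ≠ l by omega)]
    rw [if_pos rfl, if_neg (by omega : ¬ l = 0), if_pos rfl, pow_zero, one_mul]
  · simp only [Finset.mem_insert, Finset.mem_singleton, not_or] at hni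
    rw [if_neg hni.1, if_neg hni.2, mul_zero]

private lemma mpEval_Lcal {n l ε η : ℕ} (hl : 1 ≤ l)
    (M : ℕ → Matrix (Fin (η + 1) × Fin n) (Fin (ε + 1) × Fin n) ℂ) (x : ℂ) :
    mpEval l (LcalCoef n l ε η M) x
      = Matrix.fromBlocks (mpEval l M x) ((LkI n η l x)ᵀ) (LkI n ε l x) 0 := by
  ext r q
  rw [mpEval, Matrix.sum_apply]
  have hentry : ∀ i, (x ^ i • LcalCoef n l ε η M i) r q = x ^ i * (LcalCoef n l ε η M i) r q :=
    fun i => rfl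
  rw [Finset.sum_congr rfl fun i _ => hentry i]
  cases r with
  | inl a =>
    cases q with
    | inl b =>
      simp only [LcalCoef, Matrix.fromBlocks_apply₁₁]
      rw [mpEval, Matrix.sum_apply]
      rfl
    | inr b =>
      simp only [LcalCoef, Matrix.fromBlocks_apply₁₂]
      have : ∀ i, x ^ i * ((if i = 0 then (LkI0 n η)ᵀ else if i = l then (LkI1 n η)ᵀ else 0) a b)
          = x ^ i * (if i = 0 then (LkI0 n η)ᵀ a b else if i = l then (LkI1 n η)ᵀ a b else (0 : Matrix _ _ ℂ) a b) := by
        intro i; congr 1; split_ifs <;> rfl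
      rw [Finset.sum_congr rfl fun i _ => this i]
      simp only [Matrix.zero_apply]
      rw [sum_two hl]
      simp only [Matrix.transpose_apply, LkI0, LkI1, LkI, Matrix.of_apply]
      split_ifs <;> first | omega | ring
  | inr a =>
    cases q with
    | inl b =>
      simp only [LcalCoef, Matrix.fromBlocks_apply₂₁]
      have : ∀ i, x ^ i * ((if i = 0 then LkI0 n ε else if i = l then LkI1 n ε else 0) a b)
          = x ^ i * (if i = 0 then LkI0 n ε a b else if i = l then LkI1 n ε a b else (0 : Matrix _ _ ℂ) a b) := by
        intro i; congr 1; split_ifs <;> rfl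
      rw [Finset.sum_congr rfl fun i _ => this i]
      simp only [Matrix.zero_apply]
      rw [sum_two hl]
      simp only [LkI0, LkI1, LkI, Matrix.of_apply]
      split_ifs <;> first | omega | ring
    | inr b =>
      simp only [LcalCoef, Matrix.fromBlocks_apply₂₂, Matrix.zero_apply, mul_zero]
      simp
private lemma Gmat_mulVec_inl {n l p q : ℕ}
    (N : ℂ → Matrix (Fin (q + 1) × Fin n) (Fin (p + 1) × Fin n) ℂ) (x0 : ℂ)
    (x : Fin n → ℂ) (a : Fin (p+1) × Fin n) :
    ((Gmat n l p q N x0).mulVec x) (Sum.inl a)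
      = x0 ^ (q * l) * ((LamI n p l x0).mulVec x) a := by
  simp [Gmat, Matrix.mulVec, dotProduct, Finset.mul_sum, mul_assoc]

private lemma Gmat_mulVec_inr {n l p q : ℕ}
    (N : ℂ → Matrix (Fin (q + 1) × Fin n) (Fin (p + 1) × Fin n) ℂ) (x0 : ℂ)
    (x : Fin n → ℂ) (a : Fin q × Fin n) :
    ((Gmat n l p q N x0).mulVec x) (Sum.inr a)
      = (-((Smat n q l x0).mulVec ((N x0).mulVec ((LamI n p l x0).mulVec x)))) a := by
  have h : ((Gmat n l p q N x0).mulVec x) (Sum.inr a)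
      = ((-(Smat n q l x0 * (N x0 * LamI n p l x0))).mulVec x) a := rfl
  rw [h, Matrix.neg_mulVec]
  simp [Matrix.mulVec_mulVec]

private lemma key_vec {n k l : ℕ} {x : ℂ} (u : Fin (k+1) × Fin n → ℂ)
    (hu : (LamI n k l x)ᵀ.mulVec u = 0) :
    (LkI n k l x)ᵀ.mulVec (-(Smat n k l x).mulVec u) = -(x ^ (l * k) • u) := by
  funext p
  obtain ⟨j, s⟩ := p
  rw [key_id]
  rw [show (∑ m : Fin (k+1), x ^ (l * (k - (m:ℕ))) * u (m, s)) = 0 from by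
    rw [← LamIT_mulVec, hu]; rfl]
  simp only [Pi.neg_apply, Pi.smul_apply, smul_eq_mul]
  split_ifs <;> ring
/-- Right eigenvector formula (via `G`): for a finite nonzero eigenvalue `lam0` of the
regular polynomial `P`, a nonzero `z` satisfies `ℒ(lam0) z = 0` iff
`z = G(lam0; ε, η, M) x` for some nonzero `x` with `P(lam0) x = 0`. -/
theorem stmt11 (n d l ε η : ℕ) (hn : 0 < n) (hl : 1 ≤ l) (hd : d = l * (ε + η + 1))
    (A : ℕ → Matrix (Fin n) (Fin n) ℂ) (hdeg : A d ≠ 0)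
    (hreg : detPoly n d A ≠ 0)
    (M : ℕ → Matrix (Fin (η + 1) × Fin n) (Fin (ε + 1) × Fin n) ℂ)
    (hM : ∀ x : ℂ, (LamI n η l x)ᵀ * mpEval l M x * LamI n ε l x = mpEval d A x)
    (lam0 : ℂ) (hlam0 : lam0 ≠ 0) (heig : (mpEval d A lam0).det = 0)
    (z : ((Fin (ε + 1) × Fin n) ⊕ (Fin η × Fin n)) → ℂ) (hz : z ≠ 0) :
    (mpEval l (LcalCoef n l ε η M) lam0).mulVec z = 0 ↔
      ∃ x : Fin n → ℂ, x ≠ 0 ∧ (mpEval d A lam0).mulVec x = 0 ∧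
        z = (Gmat n l ε η (mpEval l M) lam0).mulVec x := by
  have hc : lam0 ^ (η * l) ≠ 0 := pow_ne_zero _ hlam0
  set Mev := mpEval l M lam0 with hMevDef
  set Pev := mpEval d A lam0 with hPevDef
  set z1 : Fin (ε + 1) × Fin n → ℂ := z ∘ Sum.inl with hz1Def
  set z2 : Fin η × Fin n → ℂ := z ∘ Sum.inr with hz2Def
  have hMP : (LamI n η l lam0)ᵀ * Mev * LamI n ε l lam0 = Pev := hM lam0
  have hsplit : (mpEval l (LcalCoef n l ε η M) lam0).mulVec z = 0 ↔
      Mev.mulVec z1 + ((LkI n η l lam0)ᵀ).mulVec z2 = 0 ∧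
        (LkI n ε l lam0).mulVec z1 = 0 := by
    rw [mpEval_Lcal hl, Matrix.fromBlocks_mulVec]
    constructor
    · intro h
      refine ⟨funext fun a => congrFun h (Sum.inl a), ?_⟩
      have h2 := funext fun a => congrFun h (Sum.inr a)
      simp [Matrix.zero_mulVec] at h2
      exact funext fun a => congrFun h2 a
    · rintro ⟨h1, h2⟩
      funext r
      cases r with
      | inl a => exact congrFun h1 a
      | inr a =>
        have := congrFun h2 a
        simp [Matrix.zero_mulVec]
        exact this
  rw [hsplit]
  -- a computation used in both directions
  have hPofu : ∀ x : Fin n → ℂ,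
      (LamI n η l lam0)ᵀ.mulVec (Mev.mulVec ((LamI n ε l lam0).mulVec x)) = Pev.mulVec x := by
    intro x
    rw [Matrix.mulVec_mulVec, Matrix.mulVec_mulVec, hMP]
  constructor
  · rintro ⟨htop, hbot⟩
    set x0 : Fin n → ℂ := fun s => z1 (Fin.last ε, s) with hx0Def
    have hz1eq : z1 = (LamI n ε l lam0).mulVec x0 := by
      funext p
      obtain ⟨j, s⟩ := p
      rw [LamI_mulVec]
      exact LkI_ker z1 hbot j s
    set x : Fin n → ℂ := (lam0 ^ (η * l))⁻¹ • x0 with hxDef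
    have hx0eq : x0 = lam0 ^ (η * l) • x := by
      rw [hxDef, smul_smul, mul_inv_cancel₀ hc, one_smul]
    -- P(lam0) x0 = 0
    have hP0 : Pev.mulVec x0 = 0 := by
      have hMz : Mev.mulVec z1 = -(((LkI n η l lam0)ᵀ).mulVec z2) :=
        eq_neg_of_add_eq_zero_left htop
      have : Pev.mulVec x0
          = (LamI n η l lam0)ᵀ.mulVec (Mev.mulVec z1) := by
        rw [hz1eq] at hMz ⊢
        rw [← hPofu x0]
      rw [this, hMz, Matrix.mulVec_neg, Matrix.mulVec_mulVec, ← Matrix.transpose_mul,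
        LkI_mul_LamI]
      simp
    have hPx : Pev.mulVec x = 0 := by
      rw [hxDef, Matrix.mulVec_smul, hP0, smul_zero]
    -- x ≠ 0
    have hxne : x ≠ 0 := by
      intro hx
      have hx00 : x0 = 0 := by rw [hx0eq, hx, smul_zero]
      have hz10 : z1 = 0 := by rw [hz1eq, hx00, Matrix.mulVec_zero]
      have hz20 : z2 = 0 := by
        apply LkIT_inj z2
        have := htop
        rw [hz10, Matrix.mulVec_zero, zero_add] at this
        exact this
      apply hz
      funext r
      cases r with
      | inl a => exact congrFun hz10 a
      | inr a => exact congrFun hz20 a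
    -- identify z2
    set u : Fin (η + 1) × Fin n → ℂ := Mev.mulVec ((LamI n ε l lam0).mulVec x) with huDef
    have hu0 : (LamI n η l lam0)ᵀ.mulVec u = 0 := by rw [huDef, hPofu, hPx]
    have hkey : (LkI n η l lam0)ᵀ.mulVec (-(Smat n η l lam0).mulVec u)
        = -(lam0 ^ (η * l) • u) := by
      rw [key_vec u hu0, mul_comm l η]
    have hz1x : z1 = lam0 ^ (η * l) • (LamI n ε l lam0).mulVec x := by
      rw [hz1eq, hx0eq, Matrix.mulVec_smul]
    have hz2eq : z2 = -(Smat n η l lam0).mulVec u := by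
      have hdiff : (LkI n η l lam0)ᵀ.mulVec (z2 - -(Smat n η l lam0).mulVec u) = 0 := by
        rw [Matrix.mulVec_sub, hkey]
        have h2 : ((LkI n η l lam0)ᵀ).mulVec z2 = -(Mev.mulVec z1) :=
          eq_neg_of_add_eq_zero_right htop
        rw [h2, hz1x, Matrix.mulVec_smul, huDef]
        exact sub_self _
      have := LkIT_inj _ hdiff
      rwa [sub_eq_zero] at this
    refine ⟨x, hxne, hPx, ?_⟩
    funext r
    cases r with
    | inl a =>
      rw [Gmat_mulVec_inl]
      have : z (Sum.inl a) = z1 a := rfl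
      rw [this, hz1x]
      simp
    | inr a =>
      rw [Gmat_mulVec_inr]
      have : z (Sum.inr a) = z2 a := rfl
      rw [this, hz2eq, ← hMevDef, ← huDef]
  · rintro ⟨x, hxne, hPx, hzeq⟩
    set u : Fin (η + 1) × Fin n → ℂ := Mev.mulVec ((LamI n ε l lam0).mulVec x) with huDef
    have hu0 : (LamI n η l lam0)ᵀ.mulVec u = 0 := by rw [huDef, hPofu, hPx]
    have hkey : (LkI n η l lam0)ᵀ.mulVec (-(Smat n η l lam0).mulVec u)
        = -(lam0 ^ (η * l) • u) := by
      rw [key_vec u hu0, mul_comm l η]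
    have hz1x : z1 = lam0 ^ (η * l) • (LamI n ε l lam0).mulVec x := by
      funext a
      rw [hz1Def]
      show z (Sum.inl a) = _
      rw [hzeq, Gmat_mulVec_inl]
      simp
    have hz2x : z2 = -(Smat n η l lam0).mulVec u := by
      funext a
      rw [hz2Def]
      show z (Sum.inr a) = _
      rw [hzeq, Gmat_mulVec_inr, ← hMevDef, ← huDef]
    constructor
    · rw [hz1x, hz2x, Matrix.mulVec_smul, ← huDef, hkey]
      abel
    · rw [hz1x, Matrix.mulVec_smul, Matrix.mulVec_mulVec, LkI_mul_LamI,
        Matrix.zero_mulVec, smul_zero]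

end
end
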